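/- arXiv:1910.03537 — 13 statements merged into one kernel-verified Lean document; each statement's English description precedes it below -/
import Mathlib

section
/- Let n, a ≥ 1 be integers and let A, B ∈ ℂ^{n×a} be nonzero matrices. Then A A* ∘ B B* ≥ (1 / min(rank(A A*), rank(B B*))) · d_{A Bᵀ} d_{A Bᵀ}* in the Loewner order, where d_{A Bᵀ} is the vector of diagonal entries of A Bᵀ. -/
open Matrix ComplexOrder
open scoped ComplexConjugate

local notation "conj'" => starRingEnd ℂ

noncomputable section
namespace SchurAux

lemma rank_pos_of_ne_zero {n a : ℕ} (A : Matrix (Fin n) (Fin a) ℂ) (hA : A ≠ 0) :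
    0 < A.rank := by
  rcases Nat.eq_zero_or_pos A.rank with h | h
  · exfalso
    apply hA
    rw [Matrix.rank] at h
    have hbot : LinearMap.range A.mulVecLin = ⊥ := Submodule.finrank_eq_zero.mp h
    ext i j
    have hmem : A.mulVecLin (Pi.single j 1) ∈ (⊥ : Submodule ℂ (Fin n → ℂ)) := by
      rw [← hbot]; exact LinearMap.mem_range_self _ _
    have hv : A *ᵥ Pi.single j 1 = 0 := by
      simpa [Matrix.mulVecLin_apply] using hmem
    have := congrFun hv i
    simpa using this
  · exact h

lemma key (a m : ℕ) (U : Matrix (Fin a) (Fin m) ℂ) (V : Matrix (Fin m) (Fin a) ℂ) :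
    Complex.normSq (U * V).trace ≤
      (U.rank : ℝ) * ∑ s : Fin a, ∑ t : Fin a, Complex.normSq ((U * V) s t) := by
  classical
  set W := U * V with hW
  let L := WithLp.linearEquiv 2 ℂ (∀ _ : Fin a, ℂ)
  let K : Submodule ℂ (PiLp 2 fun _ : Fin a => ℂ) :=
    (LinearMap.range U.mulVecLin).map (L.symm : (Fin a → ℂ) →ₗ[ℂ] PiLp 2 fun _ : Fin a => ℂ)
  set k := Module.finrank ℂ K with hk
  have hkr : k = U.rank := by
    rw [hk, Matrix.rank]
    exact LinearEquiv.finrank_map_eq L.symm _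
  let b := stdOrthonormalBasis ℂ K
  let v : Fin k → (Fin a → ℂ) := fun i => L ((b i : PiLp 2 fun _ : Fin a => ℂ))
  have hortho : ∀ i j, (∑ t, conj' (v i t) * v j t) = if i = j then (1 : ℂ) else 0 := by
    intro i j
    have h := orthonormal_iff_ite.mp b.orthonormal i j
    rw [Submodule.coe_inner, PiLp.inner_apply] at h
    simp [RCLike.inner_apply, v, L] at h ⊢
    rw [← h]
    exact Finset.sum_congr rfl fun _ _ => mul_comm _ _
  have hexp : ∀ u : Fin a → ℂ, u ∈ LinearMap.range U.mulVecLin →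
      ∀ s, ∑ i, (∑ t, conj' (v i t) * u t) * v i s = u s := by
    intro u hu s
    set y : K := ⟨L.symm u, Submodule.mem_map_of_mem hu⟩ with hy
    have h2 : ∀ i, b.repr y i = ∑ t, conj' (v i t) * u t := by
      intro i
      rw [b.repr_apply_apply, Submodule.coe_inner, PiLp.inner_apply]
      simp [RCLike.inner_apply, v, L, y]
      exact Finset.sum_congr rfl fun _ _ => mul_comm _ _
    have h3 : ∑ i, b.repr y i • v i = u := by
      have h1 := b.sum_repr y
      have := congrArg (fun z : K => L ((z : PiLp 2 fun _ : Fin a => ℂ))) h1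
      simpa [AddSubmonoidClass.coe_finset_sum, map_sum, _root_.map_smul, v, L, y] using this
    calc ∑ i, (∑ t, conj' (v i t) * u t) * v i s
        = ∑ i, (b.repr y i • v i) s := by
          refine Finset.sum_congr rfl fun i _ => ?_
          rw [h2]; simp [Pi.smul_apply, smul_eq_mul]
      _ = u s := by rw [← Finset.sum_apply, h3]
  have hcol : ∀ s : Fin a, (fun t => W t s) ∈ LinearMap.range U.mulVecLin := by
    intro s
    refine ⟨fun q => V q s, ?_⟩
    ext t
    simp [Matrix.mulVecLin_apply, Matrix.mulVec, dotProduct, hW, Matrix.mul_apply]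
  set p : Fin a → Fin a → ℂ := fun s t => ∑ i, v i s * conj' (v i t) with hp
  have htr : W.trace = ∑ s, ∑ t, p s t * W t s := by
    rw [Matrix.trace]
    refine Finset.sum_congr rfl fun s _ => ?_
    calc W.diag s = ∑ i, (∑ t, conj' (v i t) * W t s) * v i s :=
          (hexp (fun t => W t s) (hcol s) s).symm
      _ = ∑ i, ∑ t, conj' (v i t) * W t s * v i s := by
          simp [Finset.sum_mul]
      _ = ∑ t, ∑ i, conj' (v i t) * W t s * v i s := Finset.sum_comm
      _ = ∑ t, p s t * W t s := by
          refine Finset.sum_congr rfl fun t _ => ?_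
          rw [hp, Finset.sum_mul]
          exact Finset.sum_congr rfl fun i _ => by ring
  have hortho' : ∀ i j, (∑ s, v i s * conj' (v j s)) = if i = j then (1 : ℂ) else 0 := by
    intro i j
    have := congrArg conj' (hortho i j)
    rw [map_sum] at this
    calc ∑ s, v i s * conj' (v j s)
        = ∑ s, conj' (conj' (v i s) * v j s) := by
          refine Finset.sum_congr rfl fun s _ => ?_
          simp only [_root_.map_mul, Complex.conj_conj]
      _ = if i = j then 1 else 0 := by
          rw [this]; split <;> simp
  have hPC : ∑ s, ∑ t, p s t * conj' (p s t) = (k : ℂ) := by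
    have expand : ∀ s t : Fin a, p s t * conj' (p s t)
        = ∑ i, ∑ j, (v i s * conj' (v j s)) * (conj' (v i t) * v j t) := by
      intro s t
      rw [hp]
      rw [map_sum, Finset.sum_mul_sum]
      refine Finset.sum_congr rfl fun i _ => Finset.sum_congr rfl fun j _ => ?_
      simp only [_root_.map_mul, Complex.conj_conj]
      ring
    calc ∑ s, ∑ t, p s t * conj' (p s t)
        = ∑ s, ∑ t, ∑ i, ∑ j, (v i s * conj' (v j s)) * (conj' (v i t) * v j t) :=
          Finset.sum_congr rfl fun s _ => Finset.sum_congr rfl fun t _ => expand s t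
      _ = ∑ s, ∑ i, ∑ j, ∑ t, (v i s * conj' (v j s)) * (conj' (v i t) * v j t) := by
          refine Finset.sum_congr rfl fun s _ => ?_
          rw [Finset.sum_comm]
          exact Finset.sum_congr rfl fun i _ => Finset.sum_comm
      _ = ∑ i, ∑ s, ∑ j, ∑ t, (v i s * conj' (v j s)) * (conj' (v i t) * v j t) :=
          Finset.sum_comm
      _ = ∑ i, ∑ j, ∑ s, ∑ t, (v i s * conj' (v j s)) * (conj' (v i t) * v j t) :=
          Finset.sum_congr rfl fun i _ => Finset.sum_comm
      _ = ∑ i, ∑ j, (∑ s, v i s * conj' (v j s)) * (∑ t, conj' (v i t) * v j t) := by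
          refine Finset.sum_congr rfl fun i _ => Finset.sum_congr rfl fun j _ => ?_
          rw [Finset.sum_mul_sum]
      _ = (k : ℂ) := by
          simp only [hortho, hortho']
          simp [Finset.sum_ite_eq, k]
  have hP : ∑ s, ∑ t, Complex.normSq (p s t) = (k : ℝ) := by
    have h2 : ((∑ s, ∑ t, Complex.normSq (p s t) : ℝ) : ℂ) = ((k : ℝ) : ℂ) := by
      push_cast
      rw [← hPC]
      exact Finset.sum_congr rfl fun s _ => Finset.sum_congr rfl fun t _ =>
        (Complex.mul_conj _).symm
    exact_mod_cast h2
  have habs : ‖W.trace‖ ≤ ∑ s, ∑ t, ‖p s t‖ * ‖W t s‖ := by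
    rw [htr]
    refine (norm_sum_le _ _).trans (Finset.sum_le_sum fun s _ => ?_)
    refine (norm_sum_le _ _).trans (Finset.sum_le_sum fun t _ => ?_)
    rw [norm_mul]
  have hcs : (∑ z : Fin a × Fin a, ‖p z.1 z.2‖ * ‖W z.2 z.1‖) ^ 2
      ≤ (∑ z : Fin a × Fin a, ‖p z.1 z.2‖ ^ 2) * (∑ z : Fin a × Fin a, ‖W z.2 z.1‖ ^ 2) :=
    Finset.sum_mul_sq_le_sq_mul_sq _ _ _
  have e1 : (∑ z : Fin a × Fin a, ‖p z.1 z.2‖ * ‖W z.2 z.1‖)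
      = ∑ s, ∑ t, ‖p s t‖ * ‖W t s‖ := Fintype.sum_prod_type _
  have e2 : (∑ z : Fin a × Fin a, ‖p z.1 z.2‖ ^ 2) = (k : ℝ) := by
    rw [Fintype.sum_prod_type, ← hP]
    exact Finset.sum_congr rfl fun s _ => Finset.sum_congr rfl fun t _ => by
      rw [Complex.sq_norm]
  have e3 : (∑ z : Fin a × Fin a, ‖W z.2 z.1‖ ^ 2)
      = ∑ s, ∑ t, Complex.normSq (W s t) := by
    rw [Fintype.sum_prod_type]
    rw [Finset.sum_comm]
    exact Finset.sum_congr rfl fun s _ => Finset.sum_congr rfl fun t _ => by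
      rw [Complex.sq_norm]
  calc Complex.normSq W.trace = ‖W.trace‖ ^ 2 := by
        rw [Complex.sq_norm]
    _ ≤ (∑ s, ∑ t, ‖p s t‖ * ‖W t s‖) ^ 2 := pow_le_pow_left₀ (norm_nonneg _) habs 2
    _ = (∑ z : Fin a × Fin a, ‖p z.1 z.2‖ * ‖W z.2 z.1‖) ^ 2 := by rw [e1]
    _ ≤ (∑ z : Fin a × Fin a, ‖p z.1 z.2‖ ^ 2) * (∑ z : Fin a × Fin a, ‖W z.2 z.1‖ ^ 2) := hcs
    _ = (k : ℝ) * ∑ s, ∑ t, Complex.normSq (W s t) := by rw [e2, e3]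
    _ = (U.rank : ℝ) * ∑ s, ∑ t, Complex.normSq (W s t) := by rw [hkr]

end SchurAux
end

open SchurAux

theorem schur_product_lower_bound_min_rank
    (n a : ℕ) (hn : 1 ≤ n) (ha : 1 ≤ a)
    (A B : Matrix (Fin n) (Fin a) ℂ) (hA : A ≠ 0) (hB : B ≠ 0) :
    ((A * Aᴴ).hadamard (B * Bᴴ) -
      ((min (A * Aᴴ).rank (B * Bᴴ).rank : ℕ) : ℂ)⁻¹ •
        vecMulVec (A * Bᵀ).diag (star (A * Bᵀ).diag)).PosSemidef := by
  classical
  set d : Fin n → ℂ := (A * Bᵀ).diag with hd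
  set r : ℕ := min (A * Aᴴ).rank (B * Bᴴ).rank with hr
  have hrA : (A * Aᴴ).rank = A.rank := Matrix.rank_self_mul_conjTranspose A
  have hrB : (B * Bᴴ).rank = B.rank := Matrix.rank_self_mul_conjTranspose B
  have hrpos : 0 < r := by
    rw [hr, lt_min_iff, hrA, hrB]
    exact ⟨rank_pos_of_ne_zero A hA, rank_pos_of_ne_zero B hB⟩
  have hrposR : (0 : ℝ) < (r : ℝ) := by exact_mod_cast hrpos
  rw [Matrix.posSemidef_iff_dotProduct_mulVec]
  constructor
  · apply Matrix.IsHermitian.sub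
    · have h1 := isHermitian_mul_conjTranspose_self A
      have h2 := isHermitian_mul_conjTranspose_self B
      unfold Matrix.IsHermitian at *
      ext i j
      rw [conjTranspose_apply, hadamard_apply, hadamard_apply, star_mul']
      rw [← conjTranspose_apply (A * Aᴴ), ← conjTranspose_apply (B * Bᴴ), h1, h2]
    · unfold Matrix.IsHermitian
      ext i j
      simp only [conjTranspose_apply, Pi.smul_apply, vecMulVec_apply, smul_eq_mul,
        Pi.star_apply, star_mul', star_star, Matrix.smul_apply]
      have hc : star (((r : ℕ) : ℂ))⁻¹ = ((r : ℕ) : ℂ)⁻¹ := by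
        rw [star_inv₀, star_natCast]
      rw [hc]
      ring
  intro x
  set w : Fin a → Fin a → ℂ := fun k l => ∑ j, conj' (x j) * A j k * B j l with hw
  set s : ℂ := ∑ j, conj' (x j) * d j with hs
  set f : Fin n → Fin n → Fin a → Fin a → ℂ := fun j m k l =>
    (conj' (x j) * A j k * B j l) * conj' (conj' (x m) * A m k * B m l) with hf
  have hdj : ∀ j, d j = ∑ k, A j k * B j k := by
    intro j
    simp [hd, Matrix.diag_apply, Matrix.mul_apply]
  have hQ1 : star x ⬝ᵥ ((A * Aᴴ).hadamard (B * Bᴴ) *ᵥ x)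
      = ∑ j, ∑ m, ∑ k, ∑ l, f j m k l := by
    rw [dotProduct]
    refine Finset.sum_congr rfl fun j _ => ?_
    rw [Matrix.mulVec, dotProduct, Finset.mul_sum]
    refine Finset.sum_congr rfl fun m _ => ?_
    rw [hadamard_apply, Matrix.mul_apply, Matrix.mul_apply]
    simp only [conjTranspose_apply, Pi.star_apply]
    rw [Finset.sum_mul_sum]
    rw [Finset.sum_mul, Finset.mul_sum]
    refine Finset.sum_congr rfl fun k _ => ?_
    rw [Finset.sum_mul, Finset.mul_sum]
    refine Finset.sum_congr rfl fun l _ => ?_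
    simp only [hf, _root_.map_mul, Complex.conj_conj, RCLike.star_def]
    ring
  have hQ2 : ∑ k, ∑ l, w k l * conj' (w k l) = ∑ k, ∑ l, ∑ j, ∑ m, f j m k l := by
    refine Finset.sum_congr rfl fun k _ => Finset.sum_congr rfl fun l _ => ?_
    rw [hw]
    simp only
    rw [map_sum, Finset.sum_mul_sum]
  have hswap : ∑ k, ∑ l, ∑ j, ∑ m, (f j m k l) = ∑ j, ∑ m, ∑ k, ∑ l, f j m k l := by
    calc ∑ k, ∑ l, ∑ j, ∑ m, f j m k l
        = ∑ k, ∑ j, ∑ l, ∑ m, f j m k l :=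
          Finset.sum_congr rfl fun k _ => Finset.sum_comm
      _ = ∑ j, ∑ k, ∑ l, ∑ m, f j m k l := Finset.sum_comm
      _ = ∑ j, ∑ k, ∑ m, ∑ l, f j m k l :=
          Finset.sum_congr rfl fun j _ => Finset.sum_congr rfl fun k _ => Finset.sum_comm
      _ = ∑ j, ∑ m, ∑ k, ∑ l, f j m k l :=
          Finset.sum_congr rfl fun j _ => Finset.sum_comm
  have hQ : star x ⬝ᵥ ((A * Aᴴ).hadamard (B * Bᴴ) *ᵥ x)
      = ∑ k, ∑ l, w k l * conj' (w k l) := by rw [hQ1, hQ2, hswap]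
  -- the rank-one part
  have hS : star x ⬝ᵥ (vecMulVec d (star d) *ᵥ x) = s * conj' s := by
    rw [hs, map_sum, Finset.sum_mul_sum, dotProduct]
    refine Finset.sum_congr rfl fun j _ => ?_
    rw [Matrix.mulVec, dotProduct, Finset.mul_sum]
    refine Finset.sum_congr rfl fun m _ => ?_
    simp only [vecMulVec_apply, Pi.star_apply, _root_.map_mul, Complex.conj_conj,
      RCLike.star_def]
    ring
  -- the matrix w and its properties
  set wmat : Matrix (Fin a) (Fin a) ℂ := Aᵀ * (diagonal (star x) * B) with hwm
  have hwe : ∀ k l, wmat k l = w k l := by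
    intro k l
    rw [hwm, Matrix.mul_apply]
    refine Finset.sum_congr rfl fun j _ => ?_
    rw [Matrix.diagonal_mul]
    simp only [transpose_apply, Pi.star_apply, RCLike.star_def]
    ring
  have htrace : wmat.trace = s := by
    rw [Matrix.trace, hs]
    calc ∑ k, wmat.diag k = ∑ k, ∑ j, conj' (x j) * A j k * B j k := by
          refine Finset.sum_congr rfl fun k _ => ?_
          rw [Matrix.diag_apply, hwe k k]
      _ = ∑ j, ∑ k, conj' (x j) * A j k * B j k := Finset.sum_comm
      _ = ∑ j, conj' (x j) * d j := by
          refine Finset.sum_congr rfl fun j _ => ?_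
          rw [hdj, Finset.mul_sum]
          exact Finset.sum_congr rfl fun k _ => by ring
  set Q : ℝ := ∑ k, ∑ l, Complex.normSq (w k l) with hQdef
  have hQw : ∑ k : Fin a, ∑ l : Fin a, Complex.normSq (wmat k l) = Q := by
    rw [hQdef]
    exact Finset.sum_congr rfl fun k _ => Finset.sum_congr rfl fun l _ => by rw [hwe]
  -- bound via rank of A
  have b1 : Complex.normSq s ≤ (A.rank : ℝ) * Q := by
    have := key a n Aᵀ (diagonal (star x) * B)
    rw [← hwm] at this
    rw [htrace, hQw, Matrix.rank_transpose] at this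
    exact this
  -- bound via rank of B
  have hT : Bᵀ * (diagonal (star x) * A) = wmatᵀ := by
    rw [hwm, Matrix.transpose_mul, Matrix.transpose_mul, Matrix.transpose_transpose,
      Matrix.diagonal_transpose, Matrix.mul_assoc]
  have b2 : Complex.normSq s ≤ (B.rank : ℝ) * Q := by
    have := key a n Bᵀ (diagonal (star x) * A)
    rw [hT] at this
    rw [Matrix.trace_transpose, htrace, Matrix.rank_transpose] at this
    have e : ∑ s' : Fin a, ∑ t : Fin a, Complex.normSq (wmatᵀ s' t) = Q := by
      rw [← hQw, Finset.sum_comm]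
      exact Finset.sum_congr rfl fun k _ => Finset.sum_congr rfl fun l _ => by
        rw [Matrix.transpose_apply]
    rw [e] at this
    exact this
  have hmin : Complex.normSq s ≤ (r : ℝ) * Q := by
    rcases le_total (A * Aᴴ).rank (B * Bᴴ).rank with h | h
    · rw [hr, min_eq_left h, hrA]; exact b1
    · rw [hr, min_eq_right h, hrB]; exact b2
  -- put everything together
  rw [Matrix.sub_mulVec, dotProduct_sub, Matrix.smul_mulVec, dotProduct_smul,
    smul_eq_mul, hQ, hS]
  have hc1 : ∑ k, ∑ l, w k l * conj' (w k l) = ((Q : ℝ) : ℂ) := by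
    rw [hQdef]
    push_cast
    exact Finset.sum_congr rfl fun k _ => Finset.sum_congr rfl fun l _ =>
      Complex.mul_conj _
  have hc2 : s * conj' s = ((Complex.normSq s : ℝ) : ℂ) := Complex.mul_conj s
  rw [hc1, hc2]
  have hc3 : (((r : ℕ) : ℂ))⁻¹ * ((Complex.normSq s : ℝ) : ℂ)
      = (((r : ℝ)⁻¹ * Complex.normSq s : ℝ) : ℂ) := by
    push_cast
    ring
  rw [hc3, ← Complex.ofReal_sub]
  rw [Complex.zero_le_real]
  rw [sub_nonneg]
  rw [inv_mul_le_iff₀ hrposR]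
  exact hmin
end

section
/- Let n, D ≥ 1 be integers and let A, B ∈ ℝ^{n×D} be nonzero real matrices with A Aᵀ = B Bᵀ = M. Then A Aᵀ ∘ B Bᵀ ≥ (1 / rank(M)) · d_{A Bᵀ} d_{A Bᵀ}ᵀ in the Loewner order. -/
open Matrix Finset
open scoped RealInnerProductSpace

theorem schur_product_lower_bound_equal_gram
    (n D : ℕ) (hn : 1 ≤ n) (hD : 1 ≤ D)
    (A B : Matrix (Fin n) (Fin D) ℝ) (hA : A ≠ 0) (hB : B ≠ 0)
    (M : Matrix (Fin n) (Fin n) ℝ) (hAM : A * Aᵀ = M) (hBM : B * Bᵀ = M) :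
    ((A * Aᵀ).hadamard (B * Bᵀ) -
      ((M.rank : ℝ))⁻¹ • vecMulVec (A * Bᵀ).diag (A * Bᵀ).diag).PosSemidef := by
  classical
  -- rank positivity
  have hMA : M.rank = A.rank := by rw [← hAM]; exact Matrix.rank_self_mul_transpose A
  have hArank : A.rank ≠ 0 := by
    intro h0
    apply hA
    rw [Matrix.rank] at h0
    have hbot : LinearMap.range A.mulVecLin = ⊥ := Submodule.finrank_eq_zero.mp h0
    have hz : A.mulVecLin = 0 := LinearMap.range_eq_bot.mp hbot
    ext i j
    have h1 : A *ᵥ Pi.single j (1 : ℝ) = 0 := by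
      have := congrFun (congrArg DFunLike.coe hz) (Pi.single j (1 : ℝ))
      simpa [Matrix.mulVecLin_apply] using this
    have h2 := congrFun h1 i
    simpa using h2
  have hrpos : 0 < (M.rank : ℝ) := by
    have : M.rank ≠ 0 := by rw [hMA]; exact hArank
    exact_mod_cast Nat.pos_of_ne_zero this
  -- the orthogonal projection onto the span of the rows of A
  set K : Submodule ℝ (EuclideanSpace ℝ (Fin D)) :=
    Submodule.span ℝ (Set.range fun j : Fin n => (WithLp.equiv 2 (Fin D → ℝ)).symm (A j)) with hK
  set pm : EuclideanSpace ℝ (Fin D) →ₗ[ℝ] EuclideanSpace ℝ (Fin D) :=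
    K.subtype ∘ₗ (K.orthogonalProjection).toLinearMap with hpm
  have hmem : ∀ v, pm v ∈ K := fun v => (K.orthogonalProjection v).2
  have hfix : ∀ v ∈ K, pm v = v := fun v hv => Submodule.starProjection_eq_self_iff.mpr hv
  have hsa : ∀ u v : EuclideanSpace ℝ (Fin D), ⟪pm u, v⟫ = ⟪u, pm v⟫ :=
    fun u v => Submodule.inner_starProjection_left_eq_right K u v
  set P : Matrix (Fin D) (Fin D) ℝ :=
    Matrix.of fun i j => pm (EuclideanSpace.single j (1:ℝ)) i with hPm
  have hPsymm : ∀ i j, P i j = P j i := by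
    intro i j
    have h := hsa (EuclideanSpace.single i (1:ℝ)) (EuclideanSpace.single j (1:ℝ))
    rw [EuclideanSpace.inner_single_left, EuclideanSpace.inner_single_right] at h
    simpa [hPm] using h.symm
  have hPeval : ∀ (v : EuclideanSpace ℝ (Fin D)) (i : Fin D),
      pm v i = ∑ j, P i j * v j := by
    intro v i
    have h := hsa (EuclideanSpace.single i (1:ℝ)) v
    rw [EuclideanSpace.inner_single_left, PiLp.inner_apply] at h
    simp only [RCLike.inner_apply, conj_trivial, one_mul] at h
    rw [← h]
    exact Finset.sum_congr rfl fun j _ => by rw [hPsymm i j, mul_comm]; rfl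
  have hPP : ∀ i j, ∑ k, P i k * P k j = P i j := by
    intro i j
    have h := hPeval (pm (EuclideanSpace.single j (1:ℝ))) i
    rw [hfix _ (hmem _)] at h
    exact h.symm
  have hPA : ∀ (j : Fin n) (i : Fin D), ∑ q, P i q * A j q = A j i := by
    intro j i
    have hjK : ((WithLp.equiv 2 (Fin D → ℝ)).symm (A j)) ∈ K :=
      Submodule.subset_span ⟨j, rfl⟩
    have h := hPeval ((WithLp.equiv 2 (Fin D → ℝ)).symm (A j)) i
    rw [hfix _ hjK] at h
    simpa [WithLp.equiv_symm_apply, PiLp.toLp_apply] using h.symm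
  -- the trace of P equals the rank of M
  have htrace : ∑ i, P i i = (M.rank : ℝ) := by
    have hproj : LinearMap.IsProj K pm := ⟨hmem, hfix⟩
    have htr0 : LinearMap.trace ℝ _ pm = (Module.finrank ℝ K : ℝ) := hproj.trace
    have htr1 : LinearMap.trace ℝ _ pm = ∑ i, P i i := by
      rw [LinearMap.trace_eq_matrix_trace ℝ ((EuclideanSpace.basisFun (Fin D) ℝ).toBasis) pm,
        Matrix.trace]
      refine Finset.sum_congr rfl fun i _ => ?_
      rw [Matrix.diag_apply, LinearMap.toMatrix_apply,
        OrthonormalBasis.coe_toBasis_repr_apply, EuclideanSpace.basisFun_repr,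
        OrthonormalBasis.coe_toBasis, EuclideanSpace.basisFun_apply]
      rfl
    have hfr : Module.finrank ℝ K = Aᵀ.rank := by
      rw [Matrix.rank_eq_finrank_span_cols]
      have hmap : Submodule.span ℝ (Set.range Aᵀ.col) =
          K.map (WithLp.linearEquiv 2 ℝ (Fin D → ℝ)).toLinearMap := by
        rw [hK, Submodule.map_span, ← Set.range_comp]
        rfl
      rw [hmap, LinearEquiv.finrank_map_eq]
    rw [← htr1, htr0, hfr, Matrix.rank_transpose, ← hMA]
  -- sum of squares of entries of P equals the rank of M
  have hPsq : ∑ p, ∑ q, (P p q)^2 = (M.rank : ℝ) := by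
    rw [← htrace]
    refine Finset.sum_congr rfl fun p _ => ?_
    rw [← hPP p p]
    exact Finset.sum_congr rfl fun q _ => by rw [pow_two, hPsymm p q]
  refine Matrix.PosSemidef.of_dotProduct_mulVec_nonneg ?_ ?_
  · -- Hermitian part
    have hsA : ∀ i j : Fin n, (A * Aᵀ) i j = (A * Aᵀ) j i := fun i j => by
      rw [Matrix.mul_apply, Matrix.mul_apply]
      exact Finset.sum_congr rfl fun k _ => by simp [Matrix.transpose_apply, mul_comm]
    have hsB : ∀ i j : Fin n, (B * Bᵀ) i j = (B * Bᵀ) j i := fun i j => by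
      rw [Matrix.mul_apply, Matrix.mul_apply]
      exact Finset.sum_congr rfl fun k _ => by simp [Matrix.transpose_apply, mul_comm]
    ext i j
    simp only [conjTranspose_apply, Matrix.sub_apply, hadamard_apply, Matrix.smul_apply,
      vecMulVec_apply, smul_eq_mul, star_trivial]
    rw [hsA j i, hsB j i]
    ring
  · -- positivity of the quadratic form
    intro x
    set d : Fin n → ℝ := (A * Bᵀ).diag with hd
    set T : Fin D → Fin D → ℝ := fun p q => ∑ j, x j * (B j p * A j q) with hT
    set Sd : ℝ := ∑ j, x j * d j with hSd
    set Q : ℝ := ∑ i, ∑ j, x i * x j * ((A * Aᵀ) i j * (B * Bᵀ) i j) with hQ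
    -- generic swap of a quadruple sum
    have swap4 : ∀ (G : Fin n → Fin n → Fin D → Fin D → ℝ),
        (∑ i, ∑ j, ∑ p, ∑ q, G i j p q) = ∑ p, ∑ q, ∑ i, ∑ j, G i j p q := by
      intro G
      calc ∑ i, ∑ j, ∑ p, ∑ q, G i j p q
          = ∑ i, ∑ p, ∑ j, ∑ q, G i j p q :=
            Finset.sum_congr rfl fun i _ => Finset.sum_comm
        _ = ∑ p, ∑ i, ∑ j, ∑ q, G i j p q := Finset.sum_comm
        _ = ∑ p, ∑ i, ∑ q, ∑ j, G i j p q :=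
            Finset.sum_congr rfl fun p _ =>
              Finset.sum_congr rfl fun i _ => Finset.sum_comm
        _ = ∑ p, ∑ q, ∑ i, ∑ j, G i j p q :=
            Finset.sum_congr rfl fun p _ => Finset.sum_comm
    -- step: Q as sum of squares of T
    have hQT : Q = ∑ p, ∑ q, (T p q)^2 := by
      have hinner : ∀ i j : Fin n, x i * x j * ((A * Aᵀ) i j * (B * Bᵀ) i j)
          = ∑ p, ∑ q, (x i * (B i p * A i q)) * (x j * (B j p * A j q)) := by
        intro i j
        rw [Matrix.mul_apply, Matrix.mul_apply]
        simp only [Matrix.transpose_apply]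
        rw [Finset.sum_mul_sum]
        simp only [Finset.mul_sum]
        rw [Finset.sum_comm]
        exact Finset.sum_congr rfl fun p _ => Finset.sum_congr rfl fun q _ => by ring
      calc Q = ∑ i, ∑ j, ∑ p, ∑ q, (x i * (B i p * A i q)) * (x j * (B j p * A j q)) := by
              rw [hQ]
              exact Finset.sum_congr rfl fun i _ => Finset.sum_congr rfl fun j _ => hinner i j
        _ = ∑ p, ∑ q, ∑ i, ∑ j, (x i * (B i p * A i q)) * (x j * (B j p * A j q)) := swap4 _
        _ = ∑ p, ∑ q, (T p q)^2 := by
              refine Finset.sum_congr rfl fun p _ => Finset.sum_congr rfl fun q _ => ?_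
              rw [pow_two, hT, Fintype.sum_mul_sum]
    -- step: Sd as Frobenius pairing of P and T
    have hSdT : Sd = ∑ p, ∑ q, P p q * T p q := by
      have swap3 : ∀ (G : Fin n → Fin D → Fin D → ℝ),
          (∑ p, ∑ q, ∑ j, G j p q) = ∑ j, ∑ p, ∑ q, G j p q := by
        intro G
        calc ∑ p, ∑ q, ∑ j, G j p q
            = ∑ p, ∑ j, ∑ q, G j p q :=
              Finset.sum_congr rfl fun p _ => Finset.sum_comm
          _ = ∑ j, ∑ p, ∑ q, G j p q := Finset.sum_comm
      calc ∑ j, x j * d j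
          = ∑ j, ∑ p, ∑ q, x j * (B j p * (P p q * A j q)) := by
            refine Finset.sum_congr rfl fun j _ => ?_
            rw [hd, Matrix.diag_apply, Matrix.mul_apply]
            simp only [Matrix.transpose_apply]
            rw [Finset.mul_sum]
            refine Finset.sum_congr rfl fun p _ => ?_
            rw [show x j * (A j p * B j p) = x j * (B j p * A j p) by ring, ← hPA j p]
            rw [Finset.mul_sum, Finset.mul_sum]
        _ = ∑ p, ∑ q, ∑ j, x j * (B j p * (P p q * A j q)) := (swap3 _).symm
        _ = ∑ p, ∑ q, P p q * T p q := by
            refine Finset.sum_congr rfl fun p _ => Finset.sum_congr rfl fun q _ => ?_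
            rw [hT, Finset.mul_sum]
            exact Finset.sum_congr rfl fun j _ => by ring
    -- Cauchy–Schwarz
    have hCS : Sd^2 ≤ (M.rank : ℝ) * Q := by
      have h := Finset.sum_mul_sq_le_sq_mul_sq Finset.univ
        (fun z : Fin D × Fin D => P z.1 z.2) (fun z : Fin D × Fin D => T z.1 z.2)
      simp only [Fintype.sum_prod_type] at h
      rw [hSdT, hQT, ← hPsq]
      exact h
    -- conclude
    have hform : star x ⬝ᵥ (((A * Aᵀ).hadamard (B * Bᵀ) -
        ((M.rank : ℝ))⁻¹ • vecMulVec (A * Bᵀ).diag (A * Bᵀ).diag) *ᵥ x)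
        = Q - (M.rank : ℝ)⁻¹ * Sd^2 := by
      rw [hQ, hSd, pow_two, Fintype.sum_mul_sum]
      simp only [dotProduct, mulVec, Matrix.sub_apply, hadamard_apply, Matrix.smul_apply,
        vecMulVec_apply, smul_eq_mul, Pi.star_apply, star_trivial]
      rw [Finset.mul_sum, ← Finset.sum_sub_distrib]
      refine Finset.sum_congr rfl fun i _ => ?_
      rw [Finset.mul_sum, Finset.mul_sum, ← Finset.sum_sub_distrib]
      refine Finset.sum_congr rfl fun j _ => ?_
      rw [hd]
      ring
    rw [hform]
    have hstep : (M.rank : ℝ)⁻¹ * Sd^2 ≤ (M.rank : ℝ)⁻¹ * ((M.rank : ℝ) * Q) :=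
      mul_le_mul_of_nonneg_left hCS (inv_nonneg.mpr hrpos.le)
    rw [inv_mul_cancel_left₀ hrpos.ne'] at hstep
    linarith
end

section
/- Let n ≥ 1 and let M be an n × n complex correlation matrix, i.e., M is positive semidefinite with all diagonal entries equal to 1. Then M ∘ conj(M) ≥ (1/n) · E_n in the Loewner order, where conj(M) is the entrywise complex conjugate of M and E_n is the n × n all-ones matrix. -/
open Matrix ComplexOrder

theorem correlation_schur_product_lower_bound
    (n : ℕ) (hn : 1 ≤ n) (M : Matrix (Fin n) (Fin n) ℂ)
    (hM : M.PosSemidef) (hdiag : ∀ i, M i i = 1) :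
    (M.hadamard (M.map (starRingEnd ℂ)) -
      ((n : ℂ))⁻¹ • Matrix.of (fun _ _ : Fin n => (1 : ℂ))).PosSemidef := by
  classical
  have hherm : ∀ j k, (starRingEnd ℂ) (M j k) = M k j := by
    intro j k
    have := congrFun (congrFun hM.isHermitian k) j
    simpa [Matrix.conjTranspose_apply] using this
  obtain ⟨S, hSH, hSS⟩ : ∃ S : Matrix (Fin n) (Fin n) ℂ, Sᴴ = S ∧ S * S = M := by
    open scoped MatrixOrder in
    exact ⟨CFC.sqrt M, (CFC.sqrt_nonneg M).posSemidef.isHermitian,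
      CFC.sqrt_mul_sqrt_self M hM.nonneg⟩
  refine Matrix.PosSemidef.of_dotProduct_mulVec_nonneg ?_ ?_
  · -- Hermitian
    refine Matrix.IsHermitian.sub ?_ ?_
    · ext i j
      simp only [Matrix.conjTranspose_apply, Matrix.hadamard_apply, Matrix.map_apply,
        star_mul', Complex.star_def, Complex.conj_conj]
      rw [hherm j i, ← hherm i j]
    · ext i j
      simp only [Matrix.conjTranspose_apply, Matrix.smul_apply, Matrix.of_apply,
        smul_eq_mul, mul_one, Complex.star_def, map_inv₀, Complex.conj_natCast]
  · intro x
    set t : ℂ := ∑ j, x j with ht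
    set N : Matrix (Fin n) (Fin n) ℂ := S * Matrix.diagonal x * S with hN
    have hNH : Nᴴ = S * Matrix.diagonal (star x) * S := by
      simp [hN, Matrix.conjTranspose_mul, hSH, Matrix.diagonal_conjTranspose,
        Matrix.mul_assoc]
    -- trace N = t
    have htrN : ∑ m, N m m = t := by
      have h1 : Matrix.trace N = Matrix.trace (M * Matrix.diagonal x) := by
        rw [hN, Matrix.trace_mul_cycle, hSS]
      have h2 : Matrix.trace (M * Matrix.diagonal x) = ∑ j, x j := by
        simp [Matrix.trace, Matrix.mul_diagonal, Matrix.diag, hdiag]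
      simpa [Matrix.trace, Matrix.diag] using h1.trans h2
    -- Schur quadratic form equals Frobenius norm of N squared
    have hQF : star x ⬝ᵥ (M.hadamard (M.map (starRingEnd ℂ))).mulVec x
        = ∑ m, ∑ l, N m l * (starRingEnd ℂ) (N m l) := by
      have h1 : ∑ m, ∑ l, N m l * (starRingEnd ℂ) (N m l)
          = Matrix.trace (N * Nᴴ) := by
        simp [Matrix.trace, Matrix.mul_apply, Matrix.diag, Matrix.conjTranspose_apply]
      have h2 : N * Nᴴ = S * (Matrix.diagonal x * M * Matrix.diagonal (star x)) * S := by
        rw [hNH, hN]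
        rw [show S * Matrix.diagonal x * S * (S * Matrix.diagonal (star x) * S)
            = S * Matrix.diagonal x * (S * S) * Matrix.diagonal (star x) * S by
          simp only [Matrix.mul_assoc], hSS]
        simp only [Matrix.mul_assoc]
      have h3 : Matrix.trace (N * Nᴴ)
          = Matrix.trace (M * (Matrix.diagonal x * M * Matrix.diagonal (star x))) := by
        rw [h2, Matrix.trace_mul_cycle, ← Matrix.mul_assoc, hSS, Matrix.mul_assoc,
          Matrix.mul_assoc]
      rw [h1, h3]
      simp only [Matrix.trace, Matrix.diag, Matrix.mul_apply, Matrix.diagonal_apply,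
        dotProduct, Matrix.mulVec, Matrix.hadamard_apply, Matrix.map_apply,
        Pi.star_apply, Finset.mul_sum, Finset.sum_mul]
      simp only [ite_mul, mul_ite, mul_zero, zero_mul, Finset.sum_ite_eq,
        Finset.sum_ite_eq', Finset.mem_univ, if_true]
      refine Finset.sum_congr rfl fun j _ => Finset.sum_congr rfl fun k _ => ?_
      rw [hherm j k]
      ring_nf
      rw [Finset.sum_comm]
      simp only [Finset.sum_ite_eq, Finset.sum_ite_eq', Finset.mem_univ, if_true]
      ring
    -- rewrite QF as a real number
    have hQFr : star x ⬝ᵥ (M.hadamard (M.map (starRingEnd ℂ))).mulVec x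
        = ((∑ m, ∑ l, Complex.normSq (N m l) : ℝ) : ℂ) := by
      rw [hQF]
      push_cast
      refine Finset.sum_congr rfl fun m _ => Finset.sum_congr rfl fun l _ => ?_
      rw [Complex.mul_conj]
    -- the all-ones part
    have hE : star x ⬝ᵥ ((((n : ℂ))⁻¹ • Matrix.of (fun _ _ : Fin n => (1 : ℂ))).mulVec x)
        = ((n : ℂ))⁻¹ * ((Complex.normSq t : ℝ) : ℂ) := by
      have : (starRingEnd ℂ) t * t = ((Complex.normSq t : ℝ) : ℂ) := by
        rw [mul_comm, Complex.mul_conj]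
      rw [← this]
      simp only [Matrix.smul_mulVec, dotProduct_smul, smul_eq_mul]
      congr 1
      simp only [dotProduct, Matrix.mulVec, Matrix.of_apply, Pi.star_apply, ht,
        dotProduct, one_mul]
      rw [← Finset.sum_mul, map_sum]
      simp [Finset.mul_sum, Finset.sum_mul]
    -- real inequality
    have hnR : (0 : ℝ) < (n : ℝ) := by exact_mod_cast hn
    have hineq : Complex.normSq t ≤ (n : ℝ) * ∑ m, ∑ l, Complex.normSq (N m l) := by
      have habs : ‖t‖ ≤ ∑ m, ‖N m m‖ := by
        rw [← htrN]
        exact norm_sum_le _ _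
      have h1 : Complex.normSq t ≤ (∑ m, ‖N m m‖) ^ 2 := by
        rw [← Complex.sq_norm]
        exact pow_le_pow_left₀ (norm_nonneg _) habs 2
      have h2 : (∑ m, ‖N m m‖) ^ 2
          ≤ (n : ℝ) * ∑ m, ‖N m m‖ ^ 2 := by
        simpa using sq_sum_le_card_mul_sum_sq
          (s := (Finset.univ : Finset (Fin n))) (f := fun m => ‖N m m‖)
      have h3 : ∑ m, ‖N m m‖ ^ 2 ≤ ∑ m, ∑ l, Complex.normSq (N m l) := by
        refine Finset.sum_le_sum fun m _ => ?_
        rw [Complex.sq_norm]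
        exact Finset.single_le_sum (fun l _ => Complex.normSq_nonneg _)
          (Finset.mem_univ m)
      calc Complex.normSq t ≤ (∑ m, ‖N m m‖) ^ 2 := h1
        _ ≤ (n : ℝ) * ∑ m, ‖N m m‖ ^ 2 := h2
        _ ≤ (n : ℝ) * ∑ m, ∑ l, Complex.normSq (N m l) :=
            mul_le_mul_of_nonneg_left h3 hnR.le
    rw [Matrix.sub_mulVec, dotProduct_sub, hQFr, hE]
    have : ((n : ℂ))⁻¹ * ((Complex.normSq t : ℝ) : ℂ)
        = (((n : ℝ)⁻¹ * Complex.normSq t : ℝ) : ℂ) := by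
      push_cast; ring
    rw [this, ← Complex.ofReal_sub, Complex.zero_le_real, sub_nonneg]
    rw [inv_mul_le_iff₀ hnR]
    exact hineq
end

section
/- Let n ≥ 1 and let M be an n × n complex positive semidefinite matrix. Then M ∘ conj(M) ≥ (1/n) · d_M d_M* in the Loewner order, where conj(M) is the entrywise complex conjugate of M and d_M = (m_{11}, …, m_{nn})ᵀ is the vector of diagonal entries of M. -/
open Matrix ComplexOrder

theorem psd_schur_conj_lower_bound_diag
    (n : ℕ) (hn : 1 ≤ n) (M : Matrix (Fin n) (Fin n) ℂ)
    (hM : M.PosSemidef) :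
    (M.hadamard (M.map (starRingEnd ℂ)) -
      ((n : ℂ))⁻¹ • vecMulVec M.diag (star M.diag)).PosSemidef := by
  obtain ⟨B, hBB, hBh⟩ : ∃ B : Matrix (Fin n) (Fin n) ℂ, B * B = M ∧ B.IsHermitian := by
    open scoped MatrixOrder in
    exact ⟨CFC.sqrt M, CFC.sqrt_mul_sqrt_self M hM.nonneg,
      (CFC.sqrt_nonneg M).posSemidef.isHermitian⟩
  have hMB : ∀ j k, M j k = ∑ l, (starRingEnd ℂ) (B l j) * B l k := by
    intro j k
    rw [← hBB, Matrix.mul_apply]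
    exact Finset.sum_congr rfl fun l _ => by rw [← hBh.apply j l]; rfl
  refine Matrix.PosSemidef.of_dotProduct_mulVec_nonneg ?_ ?_
  · apply Matrix.IsHermitian.sub
    · show _ = _
      ext j k
      have h : M k j = (starRingEnd ℂ) (M j k) := (hM.1.apply k j).symm
      simp only [conjTranspose_apply, hadamard_apply, map_apply, h, _root_.map_mul,
        Complex.conj_conj, Complex.star_def]
    · show _ = _
      ext j k
      have h1 : star (M.diag k) = (starRingEnd ℂ) (M.diag k) := rfl
      have h2 : star (M.diag j) = (starRingEnd ℂ) (M.diag j) := rfl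
      simp only [conjTranspose_apply, Matrix.smul_apply, vecMulVec_apply, Pi.star_apply,
        smul_eq_mul, star_mul', h1, h2, Complex.star_def, _root_.map_mul, _root_.map_inv₀,
        Complex.conj_conj, Complex.conj_natCast]
      ring
  · intro x
    set y : Fin n → Fin n → ℂ :=
      fun l p => ∑ j, (starRingEnd ℂ) (x j) * ((starRingEnd ℂ) (B l j) * B p j) with hy
    have hyconj : ∀ l p, (starRingEnd ℂ) (y l p)
        = ∑ k, x k * (B l k * (starRingEnd ℂ) (B p k)) := by
      intro l p
      rw [hy, map_sum]
      exact Finset.sum_congr rfl fun k _ => by simp [_root_.map_mul]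
    set T : (Fin n × Fin n) → (Fin n × Fin n) → ℂ := fun jk lp =>
      ((starRingEnd ℂ) (x jk.1) * ((starRingEnd ℂ) (B lp.1 jk.1) * B lp.2 jk.1)) *
      (x jk.2 * (B lp.1 jk.2 * (starRingEnd ℂ) (B lp.2 jk.2))) with hT
    have h1 : star x ⬝ᵥ (M.hadamard (M.map (starRingEnd ℂ))) *ᵥ x
        = ∑ l, ∑ p, y l p * (starRingEnd ℂ) (y l p) := by
      have key : ∀ j k, (starRingEnd ℂ) (x j) * (M j k * (starRingEnd ℂ) (M j k) * x k)
          = ∑ lp : Fin n × Fin n, T (j, k) lp := by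
        intro j k
        have hconjM : (starRingEnd ℂ) (M j k) = ∑ p, B p j * (starRingEnd ℂ) (B p k) := by
          rw [hMB j k, map_sum]
          exact Finset.sum_congr rfl fun p _ => by simp [_root_.map_mul]
        rw [Fintype.sum_prod_type, hconjM, hMB j k, Finset.sum_mul_sum]
        simp only [Finset.mul_sum, Finset.sum_mul]
        exact Finset.sum_congr rfl fun l _ => Finset.sum_congr rfl fun p _ => by
          simp only [hT]; ring
      have hL : star x ⬝ᵥ (M.hadamard (M.map (starRingEnd ℂ))) *ᵥ x
          = ∑ jk : Fin n × Fin n, ∑ lp : Fin n × Fin n, T jk lp := by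
        rw [Fintype.sum_prod_type]
        simp only [dotProduct, mulVec, hadamard_apply, map_apply, Pi.star_apply,
          Finset.mul_sum, Complex.star_def]
        exact Finset.sum_congr rfl fun j _ => Finset.sum_congr rfl fun k _ => by
          rw [← key j k]
      have hR : ∑ l, ∑ p, y l p * (starRingEnd ℂ) (y l p)
          = ∑ lp : Fin n × Fin n, ∑ jk : Fin n × Fin n, T jk lp := by
        rw [Fintype.sum_prod_type]
        refine Finset.sum_congr rfl fun l _ => Finset.sum_congr rfl fun p _ => ?_
        rw [hyconj, hy, Finset.sum_mul_sum, Fintype.sum_prod_type]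
      rw [hL, hR, Finset.sum_comm]
    have ht : ∑ j, (starRingEnd ℂ) (x j) * M j j = ∑ l, y l l := by
      rw [Finset.sum_comm]
      refine Finset.sum_congr rfl fun j _ => ?_
      rw [← Finset.mul_sum, hMB j j]
    have h2 : star x ⬝ᵥ (vecMulVec M.diag (star M.diag)) *ᵥ x
        = (∑ l, y l l) * (starRingEnd ℂ) (∑ l, y l l) := by
      rw [← ht, map_sum, Finset.sum_mul_sum]
      simp only [dotProduct, mulVec, vecMulVec_apply, Pi.star_apply, diag_apply,
        Finset.mul_sum, Complex.star_def]
      refine Finset.sum_congr rfl fun j _ => Finset.sum_congr rfl fun k _ => ?_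
      simp only [_root_.map_mul, Complex.conj_conj]
      ring
    rw [sub_mulVec, dotProduct_sub, smul_mulVec, dotProduct_smul, h1, h2]
    rw [sub_nonneg, smul_eq_mul]
    simp only [Complex.mul_conj]
    have hn0 : (0:ℝ) < n := by exact_mod_cast hn
    have hcast : ((n : ℂ))⁻¹ = ((((n:ℝ))⁻¹ : ℝ) : ℂ) := by push_cast; ring
    rw [hcast]
    norm_cast
    rw [inv_mul_le_iff₀ hn0]
    calc Complex.normSq (∑ l, y l l)
        = (‖∑ l, y l l‖)^2 := (Complex.sq_norm _).symm
      _ ≤ (∑ l, ‖y l l‖)^2 :=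
          pow_le_pow_left₀ (norm_nonneg _) (norm_sum_le _ _) 2
      _ ≤ (Finset.univ (α := Fin n)).card * ∑ l, (‖y l l‖)^2 :=
          sq_sum_le_card_mul_sum_sq
      _ = n * ∑ l, Complex.normSq (y l l) := by
          simp [Complex.sq_norm, Finset.card_univ]
      _ ≤ n * ∑ l, ∑ p, Complex.normSq (y l p) := by
          refine mul_le_mul_of_nonneg_left (Finset.sum_le_sum fun l _ => ?_) hn0.le
          exact Finset.single_le_sum (fun p _ => Complex.normSq_nonneg _) (Finset.mem_univ l)
end

section
/- Let n ≥ 1 and let A, B ∈ ℂ^{n×n}. Set M = A A*, N = B B*, and w = (A ∘ B) e, where e = (1, …, 1)ᵀ ∈ ℂ^n. Then M ∘ N ≥ (1/n) · w w* in the Loewner order. -/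
open Matrix ComplexOrder

private lemma sum4_comm {n : ℕ} {M : Type*} [AddCommMonoid M]
    (f : Fin n → Fin n → Fin n → Fin n → M) :
    (∑ j, ∑ k, ∑ p, ∑ q, f j k p q) = ∑ p, ∑ q, ∑ j, ∑ k, f j k p q :=
  calc (∑ j, ∑ k, ∑ p, ∑ q, f j k p q)
      = ∑ j, ∑ p, ∑ k, ∑ q, f j k p q :=
        Finset.sum_congr rfl fun j _ => Finset.sum_comm
    _ = ∑ p, ∑ j, ∑ k, ∑ q, f j k p q := Finset.sum_comm
    _ = ∑ p, ∑ j, ∑ q, ∑ k, f j k p q :=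
        Finset.sum_congr rfl fun p _ => Finset.sum_congr rfl fun j _ => Finset.sum_comm
    _ = ∑ p, ∑ q, ∑ j, ∑ k, f j k p q :=
        Finset.sum_congr rfl fun p _ => Finset.sum_comm

theorem schur_product_lower_bound_hadamard_row_sums
    (n : ℕ) (hn : 1 ≤ n) (A B : Matrix (Fin n) (Fin n) ℂ)
    (M N : Matrix (Fin n) (Fin n) ℂ) (hM : M = A * Aᴴ) (hN : N = B * Bᴴ)
    (w : Fin n → ℂ) (hw : w = (A.hadamard B) *ᵥ (fun _ => (1 : ℂ))) :
    (M.hadamard N - ((n : ℂ))⁻¹ • vecMulVec w (star w)).PosSemidef := by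
  subst hM hN hw
  set w : Fin n → ℂ := (A.hadamard B) *ᵥ (fun _ => (1 : ℂ)) with hw
  rw [posSemidef_iff_dotProduct_mulVec]
  constructor
  · -- Hermitian
    ext j k
    have hM : ((A * Aᴴ) j k) = (starRingEnd ℂ) ((A * Aᴴ) k j) := by
      simp only [mul_apply, conjTranspose_apply, map_sum, _root_.map_mul, Complex.star_def,
        Complex.conj_conj]
      exact Finset.sum_congr rfl fun p _ => mul_comm _ _
    have hN : ((B * Bᴴ) j k) = (starRingEnd ℂ) ((B * Bᴴ) k j) := by
      simp only [mul_apply, conjTranspose_apply, map_sum, _root_.map_mul, Complex.star_def,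
        Complex.conj_conj]
      exact Finset.sum_congr rfl fun p _ => mul_comm _ _
    simp only [conjTranspose_apply, Matrix.sub_apply, Matrix.smul_apply, hadamard_apply,
      vecMulVec_apply, Pi.star_apply, smul_eq_mul, star_sub, star_mul', Complex.star_def,
      _root_.map_mul, map_inv₀, Complex.conj_natCast, Complex.conj_conj]
    rw [← hM, ← hN]
    ring
  · intro x
    set c : Fin n → Fin n → ℂ := fun p q => ∑ j, star (x j) * A j p * B j q with hc
    have hcs : ∀ p q, star (c p q) = ∑ k, x k * star (A k p) * star (B k q) := by
      intro p q
      rw [hc]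
      simp only [star_sum, StarMul.star_mul, star_star]
      exact Finset.sum_congr rfl fun k _ => by ring
    have hQ1 : star x ⬝ᵥ ((A * Aᴴ).hadamard (B * Bᴴ) *ᵥ x)
        = ∑ p, ∑ q, c p q * star (c p q) := by
      calc star x ⬝ᵥ ((A * Aᴴ).hadamard (B * Bᴴ) *ᵥ x)
          = ∑ j, ∑ k, (star (x j) * x k) *
              ((∑ p, A j p * star (A k p)) * (∑ q, B j q * star (B k q))) := by
            simp only [dotProduct, mulVec, hadamard_apply, mul_apply, conjTranspose_apply,
              Pi.star_apply]
            refine Finset.sum_congr rfl fun j _ => ?_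
            rw [Finset.mul_sum]
            exact Finset.sum_congr rfl fun k _ => by ring
        _ = ∑ j, ∑ k, ∑ p, ∑ q,
              (star (x j) * A j p * B j q) * (x k * star (A k p) * star (B k q)) := by
            refine Finset.sum_congr rfl fun j _ => Finset.sum_congr rfl fun k _ => ?_
            rw [Fintype.sum_mul_sum, Finset.mul_sum]
            refine Finset.sum_congr rfl fun p _ => ?_
            rw [Finset.mul_sum]
            exact Finset.sum_congr rfl fun q _ => by ring
        _ = ∑ p, ∑ q, ∑ j, ∑ k,
              (star (x j) * A j p * B j q) * (x k * star (A k p) * star (B k q)) :=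
            sum4_comm _
        _ = ∑ p, ∑ q, c p q * star (c p q) := by
            refine Finset.sum_congr rfl fun p _ => Finset.sum_congr rfl fun q _ => ?_
            rw [hcs, hc, Fintype.sum_mul_sum]
    have hQ2 : star x ⬝ᵥ ((vecMulVec w (star w)) *ᵥ x)
        = (∑ p, c p p) * star (∑ p, c p p) := by
      have hw' : ∀ j, w j = ∑ p, A j p * B j p := by
        intro j
        simp [hw, mulVec, dotProduct, hadamard_apply]
      calc star x ⬝ᵥ ((vecMulVec w (star w)) *ᵥ x)
          = (∑ j, star (x j) * w j) * (∑ k, x k * star (w k)) := by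
            simp only [dotProduct, mulVec, vecMulVec_apply, Pi.star_apply]
            rw [Fintype.sum_mul_sum]
            refine Finset.sum_congr rfl fun j _ => ?_
            rw [Finset.mul_sum]
            exact Finset.sum_congr rfl fun k _ => by ring
        _ = (∑ p, c p p) * star (∑ p, c p p) := by
            congr 1
            · rw [hc]
              calc (∑ j, star (x j) * w j) = ∑ j, ∑ p, star (x j) * A j p * B j p := by
                    refine Finset.sum_congr rfl fun j _ => ?_
                    rw [hw' j, Finset.mul_sum]
                    exact Finset.sum_congr rfl fun p _ => by ring
                _ = ∑ p, ∑ j, star (x j) * A j p * B j p := Finset.sum_comm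
            · rw [star_sum]
              calc (∑ k, x k * star (w k)) = ∑ k, ∑ p, x k * star (A k p) * star (B k p) := by
                    refine Finset.sum_congr rfl fun k _ => ?_
                    rw [hw' k, star_sum, Finset.mul_sum]
                    refine Finset.sum_congr rfl fun p _ => by
                      rw [StarMul.star_mul]; ring
                _ = ∑ p, ∑ k, x k * star (A k p) * star (B k p) := Finset.sum_comm
                _ = ∑ p, star (c p p) := Finset.sum_congr rfl fun p _ => (hcs p p).symm
    have hsplit : star x ⬝ᵥ (((A * Aᴴ).hadamard (B * Bᴴ)
          - ((n : ℂ))⁻¹ • vecMulVec w (star w)) *ᵥ x)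
        = star x ⬝ᵥ ((A * Aᴴ).hadamard (B * Bᴴ) *ᵥ x)
          - ((n : ℂ))⁻¹ * (star x ⬝ᵥ ((vecMulVec w (star w)) *ᵥ x)) := by
      rw [sub_mulVec, smul_mulVec, dotProduct_sub, dotProduct_smul, smul_eq_mul]
    rw [hsplit, hQ1, hQ2]
    have hmc : ∀ z : ℂ, z * star z = (Complex.normSq z : ℂ) := fun z => by
      rw [Complex.star_def, Complex.mul_conj]
    have h1 : (∑ p, ∑ q, c p q * star (c p q))
        = ((∑ p, ∑ q, Complex.normSq (c p q) : ℝ) : ℂ) := by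
      push_cast
      exact Finset.sum_congr rfl fun p _ => Finset.sum_congr rfl fun q _ => hmc _
    rw [h1, hmc]
    have key : Complex.normSq (∑ p, c p p) ≤ n * ∑ p, ∑ q, Complex.normSq (c p q) := by
      have step1 : Complex.normSq (∑ p, c p p) ≤ n * ∑ p, Complex.normSq (c p p) := by
        have hcs2 := sq_sum_le_card_mul_sum_sq (s := (Finset.univ : Finset (Fin n)))
          (f := fun p : Fin n => ‖c p p‖)
        have habs : ‖∑ p, c p p‖ ≤ ∑ p, ‖c p p‖ :=
          norm_sum_le _ _
        have h0 : Complex.normSq (∑ p, c p p) = ‖∑ p, c p p‖ ^ 2 :=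
          (Complex.sq_norm _).symm
        rw [h0]
        calc ‖∑ p, c p p‖ ^ 2 ≤ (∑ p, ‖c p p‖) ^ 2 :=
              pow_le_pow_left₀ (norm_nonneg _) habs 2
          _ ≤ ((Finset.univ : Finset (Fin n)).card : ℝ) * ∑ p, ‖c p p‖ ^ 2 := by
              exact_mod_cast hcs2
          _ = n * ∑ p, Complex.normSq (c p p) := by
              simp [Complex.sq_norm]
      refine step1.trans ?_
      have hdiag : (∑ p, Complex.normSq (c p p)) ≤ ∑ p, ∑ q, Complex.normSq (c p q) :=
        Finset.sum_le_sum fun p _ =>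
          Finset.single_le_sum (fun q _ => Complex.normSq_nonneg _) (Finset.mem_univ p)
      have hn0 : (0:ℝ) ≤ n := Nat.cast_nonneg n
      nlinarith [hdiag]
    have hnpos : (0:ℝ) < n := by exact_mod_cast hn
    have hfin : (0:ℝ) ≤ (∑ p, ∑ q, Complex.normSq (c p q))
        - (n:ℝ)⁻¹ * Complex.normSq (∑ p, c p p) := by
      rw [sub_nonneg, inv_mul_le_iff₀ hnpos]
      exact key
    have hcast : ((∑ p, ∑ q, Complex.normSq (c p q) : ℝ) : ℂ)
        - ((n:ℂ))⁻¹ * ((Complex.normSq (∑ p, c p p) : ℝ) : ℂ)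
        = (((∑ p, ∑ q, Complex.normSq (c p q))
            - (n:ℝ)⁻¹ * Complex.normSq (∑ p, c p p) : ℝ) : ℂ) := by
      push_cast; ring
    rw [hcast]
    exact_mod_cast hfin
end

section
/- Let n ≥ 1 and let A, B ∈ ℂ^{n×n}. Then A A* ∘ B B* ≥ (A ∘ B)(A ∘ B)* in the Loewner order. -/
open Matrix ComplexOrder

theorem schur_product_lower_bound_entrywise
    (n : ℕ) (hn : 1 ≤ n) (A B : Matrix (Fin n) (Fin n) ℂ) :
    ((A * Aᴴ).hadamard (B * Bᴴ) -
      (A.hadamard B) * (A.hadamard B)ᴴ).PosSemidef := by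
  set C : Matrix (Fin n) (Fin n × Fin n) ℂ :=
    Matrix.of (fun j p => if p.1 = p.2 then 0 else A j p.1 * B j p.2) with hC
  have key : ((A * Aᴴ).hadamard (B * Bᴴ) -
      (A.hadamard B) * (A.hadamard B)ᴴ) = C * Cᴴ := by
    ext j k
    simp only [Matrix.sub_apply, hadamard_apply, mul_apply, conjTranspose_apply, hC,
      Matrix.of_apply, Fintype.sum_prod_type]
    rw [Finset.sum_mul_sum, ← Finset.sum_sub_distrib]
    apply Finset.sum_congr rfl
    intro l _
    have hf : ∀ f : Fin n → ℂ, (∑ x, if l = x then 0 else f x) = (∑ x, f x) - f l := by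
      intro f
      have h1 : (∑ x, if l = x then f x else 0) = f l := by
        simpa using Finset.sum_ite_eq Finset.univ l f
      rw [eq_sub_iff_add_eq, ← h1, ← Finset.sum_add_distrib]
      apply Finset.sum_congr rfl
      intro x _
      by_cases h : l = x <;> simp [h]
    rw [show (∑ x : Fin n, (if l = x then (0:ℂ) else A j l * B j x) *
        star (if l = x then 0 else A k l * B k x)) =
        ∑ x, if l = x then 0 else (A j l * B j x) * star (A k l * B k x) from
      Finset.sum_congr rfl fun x _ => by by_cases h : l = x <;> simp [h]]
    rw [hf fun x => (A j l * B j x) * star (A k l * B k x)]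
    congr 1
    apply Finset.sum_congr rfl
    intro x _
    simp only [star_mul']
    ring
  rw [key]
  exact Matrix.posSemidef_self_mul_conjTranspose C
end

section
/- Let n ≥ 1 and let A, B ∈ ℂ^{n×n} be nonzero matrices. Then A A* ∘ B B* ≥ (1 / max(rank(A A*), rank(B B*))) · d_{A Bᵀ} d_{A Bᵀ}* in the Loewner order, where d_{A Bᵀ} is the vector of diagonal entries of A Bᵀ. -/
open Matrix ComplexOrder

section SchurAux

lemma schur_cs_sum {ι : Type*} [Fintype ι] (f g : ι → ℂ) :
    ‖∑ i, f i * g i‖ ^ 2 ≤ (∑ i, ‖f i‖ ^ 2) * (∑ i, ‖g i‖ ^ 2) := by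
  let u : EuclideanSpace ℂ ι := WithLp.toLp 2 (fun i => starRingEnd ℂ (f i))
  let v : EuclideanSpace ℂ ι := WithLp.toLp 2 g
  have h1 : (inner ℂ u v : ℂ) = ∑ i, f i * g i := by
    simp [u, v, PiLp.inner_apply, RCLike.inner_apply]
    exact Finset.sum_congr rfl fun i _ => mul_comm _ _
  have h2 : ‖u‖ ^ 2 = ∑ i, ‖f i‖ ^ 2 := by
    rw [EuclideanSpace.norm_eq, Real.sq_sqrt (by positivity)]
    simp [u]
  have h3 : ‖v‖ ^ 2 = ∑ i, ‖g i‖ ^ 2 := by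
    rw [EuclideanSpace.norm_eq, Real.sq_sqrt (by positivity)]
  calc ‖∑ i, f i * g i‖ ^ 2 = ‖(inner ℂ u v : ℂ)‖ ^ 2 := by rw [h1]
    _ ≤ (‖u‖ * ‖v‖) ^ 2 :=
        pow_le_pow_left₀ (norm_nonneg _) (norm_inner_le_norm (𝕜 := ℂ) u v) 2
    _ = _ := by rw [mul_pow, h2, h3]

lemma schur_trace_bound {n : ℕ} (C : Matrix (Fin n) (Fin n) ℂ)
    (S : Submodule ℂ (EuclideanSpace ℂ (Fin n)))
    (hcol : ∀ m, WithLp.toLp 2 (fun j => C j m) ∈ S) :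
    ‖∑ k, C k k‖ ^ 2 ≤ (Module.finrank ℂ S : ℝ) * ∑ k, ∑ j, ‖C j k‖ ^ 2 := by
  classical
  set d := Module.finrank ℂ S with hd
  let b : OrthonormalBasis (Fin d) ℂ S := stdOrthonormalBasis ℂ S
  let y : Fin n → S := fun m => ⟨WithLp.toLp 2 (fun j => C j m), hcol m⟩
  have hval : ∀ m, ((y m : EuclideanSpace ℂ (Fin n)))
      = ∑ i, b.repr (y m) i • ((b i : S) : EuclideanSpace ℂ (Fin n)) := by
    intro m
    conv_lhs => rw [← b.sum_repr (y m)]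
    push_cast
    rfl
  have hC : ∀ k m, C k m = ∑ i, b.repr (y m) i * ((b i : S) : EuclideanSpace ℂ (Fin n)) k := by
    intro k m
    have h0 : C k m = ((y m : EuclideanSpace ℂ (Fin n))) k := rfl
    rw [h0, hval m, WithLp.ofLp_sum, Finset.sum_apply k Finset.univ]
    rfl
  have ht : ∑ k, C k k
      = ∑ p : Fin n × Fin d, (b.repr (y p.1) p.2)
          * (((b p.2 : S) : EuclideanSpace ℂ (Fin n)) p.1) := by
    rw [Fintype.sum_prod_type]
    exact Finset.sum_congr rfl fun k _ => hC k k
  have key := schur_cs_sum (fun p : Fin n × Fin d => b.repr (y p.1) p.2)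
    (fun p : Fin n × Fin d => ((b p.2 : S) : EuclideanSpace ℂ (Fin n)) p.1)
  rw [← ht] at key
  have hf : ∑ p : Fin n × Fin d, ‖b.repr (y p.1) p.2‖ ^ 2 = ∑ k, ∑ j, ‖C j k‖ ^ 2 := by
    rw [Fintype.sum_prod_type]
    refine Finset.sum_congr rfl fun k _ => ?_
    have h1 : ∑ i, ‖b.repr (y k) i‖ ^ 2 = ‖b.repr (y k)‖ ^ 2 := by
      rw [EuclideanSpace.norm_eq, Real.sq_sqrt (by positivity)]
    have h2 : ‖b.repr (y k)‖ = ‖(y k : EuclideanSpace ℂ (Fin n))‖ := b.repr.norm_map (y k)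
    have h3 : ‖(y k : EuclideanSpace ℂ (Fin n))‖ ^ 2 = ∑ j, ‖C j k‖ ^ 2 := by
      rw [EuclideanSpace.norm_eq, Real.sq_sqrt (by positivity)]
    rw [h1, h2, h3]
  have hg : ∑ p : Fin n × Fin d, ‖((b p.2 : S) : EuclideanSpace ℂ (Fin n)) p.1‖ ^ 2
      = (d : ℝ) := by
    rw [Fintype.sum_prod_type_right]
    have hone : ∀ i : Fin d, ∑ k, ‖((b i : S) : EuclideanSpace ℂ (Fin n)) k‖ ^ 2 = 1 := by
      intro i
      have h1 : ∑ k, ‖((b i : S) : EuclideanSpace ℂ (Fin n)) k‖ ^ 2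
          = ‖((b i : S) : EuclideanSpace ℂ (Fin n))‖ ^ 2 := by
        rw [EuclideanSpace.norm_eq, Real.sq_sqrt (by positivity)]
      rw [h1]
      have h2 : ‖((b i : S) : EuclideanSpace ℂ (Fin n))‖ = ‖b i‖ := rfl
      rw [h2, b.orthonormal.1 i, one_pow]
    rw [Finset.sum_congr rfl fun i _ => hone i]
    simp
  rw [hf, hg] at key
  calc ‖∑ k, C k k‖ ^ 2 ≤ (∑ k, ∑ j, ‖C j k‖ ^ 2) * (d : ℝ) := key
    _ = (d : ℝ) * ∑ k, ∑ j, ‖C j k‖ ^ 2 := mul_comm _ _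

lemma schur_sum_swap4 {α : Type*} [AddCommMonoid α] {n : ℕ}
    (f : Fin n → Fin n → Fin n → Fin n → α) :
    ∑ j, ∑ l, ∑ k, ∑ m, f j l k m = ∑ k, ∑ m, ∑ j, ∑ l, f j l k m := by
  rw [Finset.sum_congr rfl fun j _ => Finset.sum_comm]
  rw [Finset.sum_comm]
  rw [Finset.sum_congr rfl fun k _ => Finset.sum_congr rfl fun j _ => Finset.sum_comm]
  rw [Finset.sum_congr rfl fun k _ => Finset.sum_comm]

lemma schur_rank_pos {n : ℕ} (A : Matrix (Fin n) (Fin n) ℂ) (hA : A ≠ 0) : 0 < A.rank := by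
  rw [pos_iff_ne_zero]
  intro h
  apply hA
  rw [Matrix.rank] at h
  have h2 : LinearMap.range A.mulVecLin = ⊥ := Submodule.finrank_eq_zero.mp h
  rw [LinearMap.range_eq_bot] at h2
  ext i j
  have := congrFun (LinearMap.congr_fun h2 (Pi.single j 1)) i
  simpa [Matrix.mulVecLin_apply, Matrix.mulVec, dotProduct, Pi.single_apply] using this

lemma schur_mul_star_self (z : ℂ) : z * star z = ((‖z‖ ^ 2 : ℝ) : ℂ) := by
  rw [RCLike.star_def, Complex.mul_conj]
  norm_cast
  rw [Complex.normSq_eq_norm_sq]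

end SchurAux

theorem schur_product_lower_bound_max_rank
    (n : ℕ) (hn : 1 ≤ n)
    (A B : Matrix (Fin n) (Fin n) ℂ) (hA : A ≠ 0) (hB : B ≠ 0) :
    ((A * Aᴴ).hadamard (B * Bᴴ) -
      ((max (A * Aᴴ).rank (B * Bᴴ).rank : ℕ) : ℂ)⁻¹ •
        vecMulVec (A * Bᵀ).diag (star (A * Bᵀ).diag)).PosSemidef := by
  classical
  set r : ℕ := max (A * Aᴴ).rank (B * Bᴴ).rank with hr
  set dv := (A * Bᵀ).diag with hdv
  -- rank facts
  have hrankA : A.rank ≤ r := by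
    rw [hr, Matrix.rank_self_mul_conjTranspose]
    exact le_max_left _ _
  have hApos : 0 < A.rank := schur_rank_pos A hA
  have hrpos : 0 < r := lt_of_lt_of_le hApos hrankA
  -- the subspace
  let S : Submodule ℂ (EuclideanSpace ℂ (Fin n)) :=
    Submodule.map ((WithLp.linearEquiv 2 ℂ (Fin n → ℂ)).symm :
      (Fin n → ℂ) →ₗ[ℂ] EuclideanSpace ℂ (Fin n)) (LinearMap.range (Aᵀ.mulVecLin))
  have hfinrank : Module.finrank ℂ S = Aᵀ.rank := LinearEquiv.finrank_map_eq _ _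
  have hfinrank' : (Module.finrank ℂ S : ℝ) ≤ (r : ℝ) := by
    rw [hfinrank, Matrix.rank_transpose]
    exact_mod_cast hrankA
  rw [posSemidef_iff_dotProduct_mulVec]
  constructor
  · -- Hermitian
    have h1 : ((A * Aᴴ).hadamard (B * Bᴴ)).IsHermitian := by
      have hP := isHermitian_mul_conjTranspose_self A
      have hQ := isHermitian_mul_conjTranspose_self B
      ext i j
      simp only [conjTranspose_apply, hadamard_apply, star_mul']
      rw [← conjTranspose_apply, ← conjTranspose_apply, hP, hQ]
    have h2 : (vecMulVec dv (star dv)).IsHermitian := by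
      ext i j
      simp only [conjTranspose_apply, vecMulVec_apply, Pi.star_apply, star_mul', star_star]
      ring
    have h3 : (((r : ℂ))⁻¹ • vecMulVec dv (star dv)).IsHermitian := by
      show _ᴴ = _
      rw [conjTranspose_smul, h2]
      congr 1
      simp
    exact h1.sub h3
  · -- quadratic form
    intro x
    set D : Matrix (Fin n) (Fin n) ℂ :=
      Matrix.of (fun k m => ∑ j, A j k * (star (x j) * B j m)) with hD
    have hDapp : ∀ k m, D k m = ∑ j, A j k * (star (x j) * B j m) := fun _ _ => rfl
    set t : ℂ := ∑ k, D k k with htdef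
    -- identity for the hadamard part
    have e1 : star x ⬝ᵥ ((A * Aᴴ).hadamard (B * Bᴴ)) *ᵥ x = ∑ k, ∑ m, D k m * star (D k m) := by
      have rhs : ∀ (k m : Fin n), D k m * star (D k m)
          = ∑ j, ∑ l, (star (x j) * (x l
              * (A j k * (star (A l k) * (B j m * star (B l m)))))) := by
        intro k m
        rw [hDapp, star_sum, Finset.sum_mul]
        refine Finset.sum_congr rfl fun j _ => ?_
        rw [Finset.mul_sum]
        refine Finset.sum_congr rfl fun l _ => ?_
        simp only [star_mul', star_star]
        ring
      rw [Finset.sum_congr rfl fun k _ => Finset.sum_congr rfl fun m _ => rhs k m,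
        ← schur_sum_swap4 (fun j l k m => (star (x j) * (x l
          * (A j k * (star (A l k) * (B j m * star (B l m)))))))]
      simp only [dotProduct, mulVec, hadamard_apply, mul_apply, conjTranspose_apply,
        Pi.star_apply, Finset.sum_mul, Finset.mul_sum]
      refine Finset.sum_congr rfl fun j _ => Finset.sum_congr rfl fun l _ => ?_
      rw [Finset.sum_comm]
      exact Finset.sum_congr rfl fun k _ => Finset.sum_congr rfl fun m _ => by ring
    -- identity for the rank-one part
    have e2 : star x ⬝ᵥ (vecMulVec dv (star dv)) *ᵥ x = t * star t := by
      have h2 : (∑ j, star (x j) * dv j) = t := by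
        have hterm : ∀ j, star (x j) * dv j = ∑ k, A j k * (star (x j) * B j k) := by
          intro j
          rw [hdv]
          simp only [diag_apply, mul_apply, transpose_apply, Finset.mul_sum]
          exact Finset.sum_congr rfl fun k _ => by ring
        rw [Finset.sum_congr rfl fun j _ => hterm j, htdef, Finset.sum_comm]
        rfl
      have h1 : star x ⬝ᵥ (vecMulVec dv (star dv)) *ᵥ x
          = (∑ j, star (x j) * dv j) * ∑ l, star (dv l) * x l := by
        rw [Finset.sum_mul_sum]
        simp only [dotProduct, mulVec, vecMulVec_apply, Pi.star_apply, Finset.mul_sum]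
        exact Finset.sum_congr rfl fun j _ => Finset.sum_congr rfl fun l _ => by ring
      have h3 : (∑ l, star (dv l) * x l) = star t := by
        rw [← h2, star_sum]
        exact Finset.sum_congr rfl fun l _ => by simp only [star_mul', star_star]; ring
      rw [h1, h2, h3]
    -- columns of D lie in S
    have hcol : ∀ m, WithLp.toLp 2 (fun k => D k m) ∈ S :=
    fun m => ⟨_, ⟨fun j => star (x j) * B j m, rfl⟩, rfl⟩
    -- the real inequality
    have hb := schur_trace_bound D S hcol
    set SR : ℝ := ∑ k, ∑ m, ‖D k m‖ ^ 2 with hSR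
    have hSRnn : 0 ≤ SR := by positivity
    have hswap : ∑ k, ∑ j, ‖D j k‖ ^ 2 = SR := Finset.sum_comm
    rw [hswap] at hb
    have hbr : ‖t‖ ^ 2 ≤ (r : ℝ) * SR := by
      refine le_trans hb ?_
      exact mul_le_mul_of_nonneg_right hfinrank' hSRnn
    have hrR : (0 : ℝ) < (r : ℝ) := by exact_mod_cast hrpos
    have hreal : ((r : ℝ))⁻¹ * ‖t‖ ^ 2 ≤ SR := by
      rw [inv_mul_le_iff₀ hrR]
      exact hbr
    -- assemble
    rw [sub_mulVec, dotProduct_sub, smul_mulVec, dotProduct_smul, e1, e2,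
      smul_eq_mul, schur_mul_star_self t]
    have esum : ∑ k, ∑ m, D k m * star (D k m) = ((SR : ℝ) : ℂ) := by
      rw [Finset.sum_congr rfl fun k _ => Finset.sum_congr rfl fun m _ =>
        schur_mul_star_self (D k m), hSR]
      norm_cast
    rw [esum]
    have hc : ((r : ℂ))⁻¹ = ((((r : ℝ))⁻¹ : ℝ) : ℂ) := by push_cast; ring
    rw [hc, ← Complex.ofReal_mul, ← Complex.ofReal_sub]
    rw [Complex.zero_le_real]
    linarith
end

section
/- Let n, a, b ≥ 1 be integers and let A ∈ ℂ^{n×a} and B ∈ ℂ^{n×b} be nonzero matrices. Define the vector w ∈ ℂ^n by w_j = Σ_{k=1}^{min(a,b)} a_{jk} b_{jk} (equivalently, w is the diagonal of A₀ B₀ᵀ where A₀, B₀ are obtained from A, B by appending zero columns on the right until both have the same number of columns). Then A A* ∘ B B* ≥ (1 / min(rank(A A*), rank(B B*))) · w w* in the Loewner order. -/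
open Matrix ComplexOrder

private lemma exists_projection {a b : ℕ} (C : Matrix (Fin a) (Fin b) ℂ) :
    ∃ P : Matrix (Fin a) (Fin a) ℂ, P * C = C ∧
      (∑ s, ∑ s', Complex.normSq (P s s')) = (C.rank : ℝ) := by
  have hH : (C * Cᴴ).IsHermitian := isHermitian_mul_conjTranspose_self C
  set U : Matrix (Fin a) (Fin a) ℂ := (hH.eigenvectorUnitary : Matrix (Fin a) (Fin a) ℂ) with hU
  set d : Fin a → ℂ := fun i => if hH.eigenvalues i = 0 then 0 else 1 with hd
  set P := U * diagonal d * Uᴴ with hP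
  have hUU : Uᴴ * U = 1 := by
    rw [← star_eq_conjTranspose]
    exact mem_unitaryGroup_iff'.mp (hH.eigenvectorUnitary).2
  have hd1 : (fun i => d i * (RCLike.ofReal ∘ hH.eigenvalues) i) = (RCLike.ofReal ∘ hH.eigenvalues) := by
    funext i
    by_cases h : hH.eigenvalues i = 0 <;> simp [hd, h]
  have hd2 : star d = d := by
    funext i
    by_cases h : hH.eigenvalues i = 0 <;> simp [hd, h]
  have hd3 : (fun i => d i * d i) = d := by
    funext i
    by_cases h : hH.eigenvalues i = 0 <;> simp [hd, h]
  have hPh : Pᴴ = P := by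
    rw [hP]
    simp only [conjTranspose_mul, conjTranspose_conjTranspose, diagonal_conjTranspose, hd2]
    rw [Matrix.mul_assoc]
  have hPH : P * (C * Cᴴ) = C * Cᴴ := by
    conv_lhs => rw [hH.spectral_theorem]
    rw [Unitary.conjStarAlgAut_apply, ← hU, star_eq_conjTranspose, hP]
    calc U * diagonal d * Uᴴ * (U * diagonal (RCLike.ofReal ∘ hH.eigenvalues) * Uᴴ)
        = U * diagonal d * (Uᴴ * U) * diagonal (RCLike.ofReal ∘ hH.eigenvalues) * Uᴴ := by
          simp only [Matrix.mul_assoc]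
      _ = U * (diagonal d * diagonal (RCLike.ofReal ∘ hH.eigenvalues)) * Uᴴ := by
          rw [hUU]; simp only [Matrix.mul_one, Matrix.mul_assoc]
      _ = U * diagonal (RCLike.ofReal ∘ hH.eigenvalues) * Uᴴ := by
          rw [diagonal_mul_diagonal, hd1]
      _ = C * Cᴴ := by
          conv_rhs => rw [hH.spectral_theorem]
          rw [Unitary.conjStarAlgAut_apply, ← hU, star_eq_conjTranspose]
  have hPC : P * C = C := by
    have key : (C - P * C) * (C - P * C)ᴴ = 0 := by
      rw [conjTranspose_sub, conjTranspose_mul, hPh, Matrix.sub_mul, Matrix.mul_sub,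
        Matrix.mul_sub]
      rw [show C * (Cᴴ * P) = (C * Cᴴ) * P by rw [Matrix.mul_assoc],
        show P * C * Cᴴ = P * (C * Cᴴ) by rw [Matrix.mul_assoc],
        show P * C * (Cᴴ * P) = P * (C * Cᴴ) * P by simp only [Matrix.mul_assoc], hPH]
      abel
    have h0 := self_mul_conjTranspose_eq_zero.mp key
    rw [sub_eq_zero] at h0
    exact h0.symm
  refine ⟨P, hPC, ?_⟩
  have hPPh : P * Pᴴ = P := by
    rw [hPh, hP]
    calc U * diagonal d * Uᴴ * (U * diagonal d * Uᴴ)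
        = U * diagonal d * (Uᴴ * U) * diagonal d * Uᴴ := by simp only [Matrix.mul_assoc]
      _ = U * (diagonal d * diagonal d) * Uᴴ := by
          rw [hUU]; simp only [Matrix.mul_one, Matrix.mul_assoc]
      _ = U * diagonal d * Uᴴ := by rw [diagonal_mul_diagonal, hd3]
  have htr : P.trace = (C.rank : ℂ) := by
    rw [hP, Matrix.trace_mul_comm, ← Matrix.mul_assoc, hUU, Matrix.one_mul, trace_diagonal]
    have hrk : C.rank = (C * Cᴴ).rank := (rank_self_mul_conjTranspose C).symm
    rw [hrk, hH.rank_eq_card_non_zero_eigs, Fintype.card_subtype]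
    have : (∑ i : Fin a, d i) = ∑ i : Fin a, if hH.eigenvalues i ≠ 0 then (1:ℂ) else 0 := by
      refine Finset.sum_congr rfl fun i _ => ?_
      by_cases h : hH.eigenvalues i = 0 <;> simp [hd, h]
    rw [this, Finset.sum_boole]
  have htr2 : (P * Pᴴ).trace = (C.rank : ℂ) := by rw [hPPh, htr]
  have hsum : ((∑ s, ∑ s', Complex.normSq (P s s') : ℝ) : ℂ) = (C.rank : ℂ) := by
    rw [← htr2, Matrix.trace]
    push_cast
    refine Finset.sum_congr rfl fun s _ => ?_
    rw [Matrix.diag_apply, Matrix.mul_apply]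
    refine Finset.sum_congr rfl fun s' _ => ?_
    rw [conjTranspose_apply, ← Complex.mul_conj]
    rfl
  exact_mod_cast hsum

private lemma sum_normSq_comp_le {k a : ℕ} (i : Fin k → Fin a) (hi : Function.Injective i)
    (f : Fin a → ℝ) (hf : ∀ s, 0 ≤ f s) :
    ∑ t : Fin k, f (i t) ≤ ∑ s : Fin a, f s := by
  rw [← Finset.sum_image (g := i) (f := f) (fun x _ y _ hxy => hi hxy)]
  exact Finset.sum_le_sum_of_subset_of_nonneg (Finset.subset_univ _) fun s _ _ => hf s

private lemma key_bound {a b k : ℕ} (C : Matrix (Fin a) (Fin b) ℂ) (m : ℕ)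
    (hr : C.rank ≤ m) (i : Fin k → Fin a) (j : Fin k → Fin b)
    (hi : Function.Injective i) (hj : Function.Injective j) :
    Complex.normSq (∑ t, C (i t) (j t)) ≤
      (m : ℝ) * ∑ s, ∑ t, Complex.normSq (C s t) := by
  obtain ⟨P, hPC, hPF⟩ := exists_projection C
  have hT : (∑ t, C (i t) (j t)) = ∑ t : Fin k, ∑ s : Fin a, P (i t) s * C s (j t) := by
    refine Finset.sum_congr rfl fun t _ => ?_
    calc C (i t) (j t) = (P * C) (i t) (j t) := by rw [hPC]
      _ = _ := Matrix.mul_apply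
  have habs : ‖∑ t, C (i t) (j t)‖ ≤
      ∑ t : Fin k, ∑ s : Fin a, ‖P (i t) s‖ * ‖C s (j t)‖ := by
    rw [hT]
    refine (norm_sum_le _ _).trans (Finset.sum_le_sum fun t _ => ?_)
    refine (norm_sum_le _ _).trans (Finset.sum_le_sum fun s _ => ?_)
    rw [norm_mul]
  set S1 : ℝ := ∑ t : Fin k, ∑ s : Fin a, Complex.normSq (P (i t) s) with hS1
  set S2 : ℝ := ∑ t : Fin k, ∑ s : Fin a, Complex.normSq (C s (j t)) with hS2
  have hCS : (∑ t : Fin k, ∑ s : Fin a, ‖P (i t) s‖ * ‖C s (j t)‖) ^ 2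
      ≤ S1 * S2 := by
    rw [hS1, hS2]
    simp only [← Finset.sum_product']
    calc (∑ p : Fin k × Fin a, ‖P (i p.1) p.2‖ * ‖C p.2 (j p.1)‖) ^ 2
        ≤ (∑ p : Fin k × Fin a, ‖P (i p.1) p.2‖ ^ 2) *
          ∑ p : Fin k × Fin a, ‖C p.2 (j p.1)‖ ^ 2 :=
          Finset.sum_mul_sq_le_sq_mul_sq _ _ _
      _ = _ := by
          congr 1 <;> refine Finset.sum_congr rfl fun p _ => ?_ <;> rw [Complex.sq_norm]
  have hS1le : S1 ≤ (m : ℝ) := by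
    rw [hS1]
    refine le_trans (sum_normSq_comp_le i hi (fun s' => ∑ s, Complex.normSq (P s' s))
      (fun s' => Finset.sum_nonneg fun _ _ => Complex.normSq_nonneg _)) ?_
    rw [hPF]
    exact_mod_cast Nat.cast_le.mpr hr
  have hS2le : S2 ≤ ∑ s, ∑ t, Complex.normSq (C s t) := by
    rw [hS2]
    rw [show (∑ s, ∑ t, Complex.normSq (C s t)) = ∑ t', ∑ s, Complex.normSq (C s t') from
      Finset.sum_comm]
    exact sum_normSq_comp_le j hj (fun t' => ∑ s, Complex.normSq (C s t'))
      (fun t' => Finset.sum_nonneg fun _ _ => Complex.normSq_nonneg _)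
  have hS1nn : 0 ≤ S1 := by
    rw [hS1]; exact Finset.sum_nonneg fun _ _ => Finset.sum_nonneg fun _ _ =>
      Complex.normSq_nonneg _
  have hS2nn : 0 ≤ S2 := by
    rw [hS2]; exact Finset.sum_nonneg fun _ _ => Finset.sum_nonneg fun _ _ =>
      Complex.normSq_nonneg _
  calc Complex.normSq (∑ t, C (i t) (j t))
      = ‖∑ t, C (i t) (j t)‖ ^ 2 := (Complex.sq_norm _).symm
    _ ≤ (∑ t : Fin k, ∑ s : Fin a, ‖P (i t) s‖ * ‖C s (j t)‖) ^ 2 := by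
        apply pow_le_pow_left₀ (norm_nonneg _) habs
    _ ≤ S1 * S2 := hCS
    _ ≤ (m : ℝ) * ∑ s, ∑ t, Complex.normSq (C s t) :=
        mul_le_mul hS1le hS2le hS2nn (Nat.cast_nonneg m)


private lemma sum4_swap {α : Type*} [AddCommMonoid α] {n1 n2 n3 n4 : ℕ}
    (f : Fin n1 → Fin n2 → Fin n3 → Fin n4 → α) :
    ∑ j, ∑ k, ∑ t, ∑ s, f j k t s = ∑ s, ∑ t, ∑ j, ∑ k, f j k t s :=
  calc ∑ j, ∑ k, ∑ t, ∑ s, f j k t s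
      = ∑ j, ∑ t, ∑ k, ∑ s, f j k t s :=
        Finset.sum_congr rfl fun j _ => Finset.sum_comm
    _ = ∑ t, ∑ j, ∑ k, ∑ s, f j k t s := Finset.sum_comm
    _ = ∑ t, ∑ j, ∑ s, ∑ k, f j k t s :=
        Finset.sum_congr rfl fun t _ => Finset.sum_congr rfl fun j _ => Finset.sum_comm
    _ = ∑ t, ∑ s, ∑ j, ∑ k, f j k t s :=
        Finset.sum_congr rfl fun t _ => Finset.sum_comm
    _ = ∑ s, ∑ t, ∑ j, ∑ k, f j k t s := Finset.sum_comm

private lemma quad_identity {n a b : ℕ} (x : Fin n → ℂ)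
    (A : Matrix (Fin n) (Fin a) ℂ) (B : Matrix (Fin n) (Fin b) ℂ) :
    star x ⬝ᵥ (((A * Aᴴ).hadamard (B * Bᴴ)) *ᵥ x)
      = ∑ s : Fin a, ∑ t : Fin b,
          ((∑ j, A j s * (star x j * B j t)) * star (∑ j, A j s * (star x j * B j t))) := by
  calc star x ⬝ᵥ (((A * Aᴴ).hadamard (B * Bᴴ)) *ᵥ x)
      = ∑ j, ∑ k, ∑ t : Fin b, ∑ s : Fin a,
          (A j s * (star x j * B j t)) * star (A k s * (star x k * B k t)) := by
        simp only [dotProduct, mulVec, hadamard_apply, Matrix.mul_apply, conjTranspose_apply,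
          Finset.sum_mul_sum, Finset.mul_sum, Finset.sum_mul]
        refine Finset.sum_congr rfl fun j _ => Finset.sum_congr rfl fun k _ =>
          Finset.sum_congr rfl fun t _ => Finset.sum_congr rfl fun s _ => ?_
        simp only [star_mul', star_star, Pi.star_apply]
        ring
    _ = ∑ s : Fin a, ∑ t : Fin b, ∑ j, ∑ k,
          (A j s * (star x j * B j t)) * star (A k s * (star x k * B k t)) :=
        sum4_swap _
    _ = _ := by
        refine Finset.sum_congr rfl fun s _ => Finset.sum_congr rfl fun t _ => ?_
        rw [star_sum, Finset.sum_mul_sum]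


private lemma matrix_rank_pos {m n : ℕ} (M : Matrix (Fin m) (Fin n) ℂ) (hM : M ≠ 0) :
    1 ≤ M.rank := by
  rw [Nat.one_le_iff_ne_zero]
  intro h
  apply hM
  have h0 : LinearMap.range M.mulVecLin = ⊥ := Submodule.finrank_eq_zero.mp h
  have h1 : M.mulVecLin = 0 := LinearMap.range_eq_bot.mp h0
  ext i j
  have h2 : M *ᵥ Pi.single j 1 = 0 := congrFun (congrArg (fun f => f.toFun) h1) (Pi.single j 1)
  have := congrFun h2 i
  simpa [mulVec_single] using this

theorem schur_product_lower_bound_rectangular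
    (n a b : ℕ) (hn : 1 ≤ n) (ha : 1 ≤ a) (hb : 1 ≤ b)
    (A : Matrix (Fin n) (Fin a) ℂ) (B : Matrix (Fin n) (Fin b) ℂ)
    (hA : A ≠ 0) (hB : B ≠ 0)
    (w : Fin n → ℂ)
    (hw : w = fun j => ∑ t : Fin (min a b),
      A j (Fin.castLE (min_le_left a b) t) * B j (Fin.castLE (min_le_right a b) t)) :
    ((A * Aᴴ).hadamard (B * Bᴴ) -
      ((min (A * Aᴴ).rank (B * Bᴴ).rank : ℕ) : ℂ)⁻¹ •
        vecMulVec w (star w)).PosSemidef := by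
  have hMH : (A * Aᴴ).IsHermitian := isHermitian_mul_conjTranspose_self A
  have hNH : (B * Bᴴ).IsHermitian := isHermitian_mul_conjTranspose_self B
  set m : ℕ := min (A * Aᴴ).rank (B * Bᴴ).rank with hmdef
  have hm1 : 1 ≤ m := by
    refine le_min ?_ ?_
    · rw [rank_self_mul_conjTranspose]; exact matrix_rank_pos A hA
    · rw [rank_self_mul_conjTranspose]; exact matrix_rank_pos B hB
  have hm0 : (0:ℝ) < (m:ℝ) := by exact_mod_cast hm1
  have hMe : ∀ j k, star ((A * Aᴴ) j k) = (A * Aᴴ) k j := by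
    intro j k
    conv_rhs => rw [← hMH]
    rw [conjTranspose_apply]
  have hNe : ∀ j k, star ((B * Bᴴ) j k) = (B * Bᴴ) k j := by
    intro j k
    conv_rhs => rw [← hNH]
    rw [conjTranspose_apply]
  rw [posSemidef_iff_dotProduct_mulVec]
  constructor
  · -- Hermitian part
    apply Matrix.IsHermitian.sub
    · ext j k
      rw [conjTranspose_apply, hadamard_apply, hadamard_apply, star_mul', hMe, hNe,
        mul_comm]
    · ext j k
      simp only [conjTranspose_apply, Matrix.smul_apply, vecMulVec_apply, Pi.star_apply,
        star_mul', star_star, smul_eq_mul, star_inv₀, star_natCast]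
      ring
  · intro x
    set C : Matrix (Fin a) (Fin b) ℂ := Aᵀ * (diagonal (star x) * B) with hC
    have hCentry : ∀ s t, C s t = ∑ j, A j s * (star x j * B j t) := by
      intro s t
      rw [hC, Matrix.mul_apply]
      refine Finset.sum_congr rfl fun l _ => ?_
      rw [transpose_apply, diagonal_mul]
    have hrank : C.rank ≤ m := by
      refine le_min ?_ ?_
      · rw [rank_self_mul_conjTranspose]
        calc C.rank ≤ (Aᵀ).rank := rank_mul_le_left _ _
          _ = A.rank := rank_transpose A
      · rw [rank_self_mul_conjTranspose]
        calc C.rank ≤ (diagonal (star x) * B).rank := rank_mul_le_right _ _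
          _ ≤ B.rank := rank_mul_le_right _ _
    set g : ℂ := ∑ t : Fin (min a b),
      C (Fin.castLE (min_le_left a b) t) (Fin.castLE (min_le_right a b) t) with hgdef
    have hq1 : star x ⬝ᵥ (((A * Aᴴ).hadamard (B * Bᴴ)) *ᵥ x)
        = ((∑ s, ∑ t, Complex.normSq (C s t) : ℝ) : ℂ) := by
      rw [quad_identity]
      have hfold : ∀ s t, (∑ j, A j s * (star x j * B j t)) = C s t :=
        fun s t => (hCentry s t).symm
      push_cast
      refine Finset.sum_congr rfl fun s _ => Finset.sum_congr rfl fun t _ => ?_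
      rw [hfold, ← Complex.mul_conj]
      rfl
    have hg : g = ∑ j, star x j * w j := by
      rw [hgdef, hw]
      simp only [hCentry]
      rw [Finset.sum_comm]
      refine Finset.sum_congr rfl fun j _ => ?_
      rw [Finset.mul_sum]
      refine Finset.sum_congr rfl fun t _ => ?_
      ring
    have hq2 : star x ⬝ᵥ ((vecMulVec w (star w)) *ᵥ x) = ((Complex.normSq g : ℝ) : ℂ) := by
      calc star x ⬝ᵥ ((vecMulVec w (star w)) *ᵥ x)
          = (∑ j, star x j * w j) * star (∑ j, star x j * w j) := by
            simp only [dotProduct, mulVec, vecMulVec_apply, Pi.star_apply, star_sum, star_mul',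
              star_star, Finset.mul_sum, Finset.sum_mul]
            rw [Finset.sum_comm]
            refine Finset.sum_congr rfl fun j _ => Finset.sum_congr rfl fun k _ => ?_
            ring
        _ = ((Complex.normSq g : ℝ) : ℂ) := by rw [← hg, ← Complex.mul_conj]; rfl
    rw [Matrix.sub_mulVec, dotProduct_sub, Matrix.smul_mulVec, dotProduct_smul, hq1, hq2]
    have hkey : Complex.normSq g ≤ (m:ℝ) * ∑ s, ∑ t, Complex.normSq (C s t) := by
      rw [hgdef]
      exact key_bound C m hrank _ _ (Fin.strictMono_castLE _).injective
        (Fin.strictMono_castLE _).injective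
    rw [smul_eq_mul]
    have hcast : ((m : ℕ) : ℂ)⁻¹ * ((Complex.normSq g : ℝ) : ℂ)
        = (((m:ℝ)⁻¹ * Complex.normSq g : ℝ) : ℂ) := by
      push_cast
      ring
    rw [hcast, ← Complex.ofReal_sub, Complex.zero_le_real, sub_nonneg, inv_mul_le_iff₀ hm0]
    exact hkey
end

section
/- Let n, k, a ≥ 1 be integers, let C ∈ ℂ^{k×n}, and let J ⊆ {1, …, n} be the set of indices of the nonzero columns of C. Let A, B ∈ ℂ^{n×a} be such that the principal submatrices (A A*)_{J×J} and (B B*)_{J×J} are nonzero. Then C (A A* ∘ B B*) C* ≥ γ · C d_{A Bᵀ} d_{A Bᵀ}* C* in the Loewner order, where γ = 1 / min(rank((A A*)_{J×J}), rank((B B*)_{J×J})) and d_{A Bᵀ} is the vector of diagonal entries of A Bᵀ. -/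
open Matrix ComplexOrder
open Finset


lemma conj_mul_self' (z : ℂ) : star z * z = (Complex.normSq z : ℂ) := by
  rw [Complex.star_def, mul_comm, Complex.mul_conj]

lemma cs_complex {ι : Type*} [Fintype ι] (f g : ι → ℂ) :
    ‖∑ i, (starRingEnd ℂ) (f i) * g i‖ ^ 2 ≤
      (∑ i, Complex.normSq (f i)) * (∑ i, Complex.normSq (g i)) := by
  have h1 : ‖∑ i, (starRingEnd ℂ) (f i) * g i‖ ≤
      ∑ i, ‖f i‖ * ‖g i‖ := by
    refine (norm_sum_le _ _).trans_eq ?_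
    exact Finset.sum_congr rfl fun i _ => by rw [norm_mul, Complex.norm_conj]
  have h2 := sum_mul_sq_le_sq_mul_sq Finset.univ (fun i => ‖f i‖)
      (fun i => ‖g i‖)
  calc ‖∑ i, (starRingEnd ℂ) (f i) * g i‖ ^ 2
      ≤ (∑ i, ‖f i‖ * ‖g i‖) ^ 2 := by
        exact pow_le_pow_left₀ (norm_nonneg _) h1 2
    _ ≤ (∑ i, ‖f i‖ ^ 2) * ∑ i, ‖g i‖ ^ 2 := h2
    _ = (∑ i, Complex.normSq (f i)) * (∑ i, Complex.normSq (g i)) := by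
        simp [Complex.sq_norm]

lemma trace_normSq_le_rank_mul_frob (m : ℕ) (T : Matrix (Fin m) (Fin m) ℂ) :
    Complex.normSq T.trace ≤ (T.rank : ℝ) * ∑ p, ∑ q, Complex.normSq (T p q) := by
  classical
  set M := Tᴴ * T with hMdef
  have hPSD : M.PosSemidef := Matrix.posSemidef_conjTranspose_mul_self T
  have hH : M.IsHermitian := hPSD.1
  set U : Matrix (Fin m) (Fin m) ℂ :=
    (Matrix.IsHermitian.eigenvectorUnitary hH : Matrix (Fin m) (Fin m) ℂ) with hUdef
  set lam := hH.eigenvalues with hlam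
  have hU1 : Uᴴ * U = 1 := by
    have := (Matrix.IsHermitian.eigenvectorUnitary hH).2
    rw [Matrix.mem_unitaryGroup_iff'] at this
    simpa [Matrix.star_eq_conjTranspose] using this
  have hU2 : U * Uᴴ = 1 := by
    have := (Matrix.IsHermitian.eigenvectorUnitary hH).2
    rw [Matrix.mem_unitaryGroup_iff] at this
    simpa [Matrix.star_eq_conjTranspose] using this
  have hspec : Uᴴ * M * U = Matrix.diagonal (RCLike.ofReal ∘ lam) := by
    conv_lhs => rw [hH.spectral_theorem]
    rw [Unitary.conjStarAlgAut_apply]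
    rw [Matrix.star_eq_conjTranspose]
    simp only [mul_assoc]
    rw [hU1]
    simp only [mul_one, ← mul_assoc]
    rw [hU1, one_mul]
  set V := T * U with hVdef
  have hVV : Vᴴ * V = Uᴴ * M * U := by
    rw [hVdef, Matrix.conjTranspose_mul, hMdef]
    simp only [mul_assoc]
  have hVcol : ∀ i, ∑ k, Complex.normSq (V k i) = lam i := by
    intro i
    have h1 : (Vᴴ * V) i i = (lam i : ℂ) := by
      rw [hVV, hspec, Matrix.diagonal_apply_eq]
      rfl
    have h2 : (Vᴴ * V) i i = ∑ k, (Complex.normSq (V k i) : ℂ) := by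
      rw [Matrix.mul_apply]
      exact Finset.sum_congr rfl fun k _ => by
        rw [Matrix.conjTranspose_apply, conj_mul_self']
    rw [h2] at h1
    exact_mod_cast h1
  have hUcol : ∀ i, ∑ k, Complex.normSq (U k i) = 1 := by
    intro i
    have h1 : (Uᴴ * U) i i = 1 := by rw [hU1]; simp
    have h2 : (Uᴴ * U) i i = ∑ k, (Complex.normSq (U k i) : ℂ) := by
      rw [Matrix.mul_apply]
      exact Finset.sum_congr rfl fun k _ => by
        rw [Matrix.conjTranspose_apply, conj_mul_self']
    rw [h2] at h1
    exact_mod_cast h1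
  set c : Fin m → ℂ := fun i => ∑ k, (starRingEnd ℂ) (U k i) * V k i with hc
  have htrace : T.trace = ∑ i, c i := by
    conv_lhs => rw [← mul_one T, ← hU2, ← mul_assoc]
    rw [Matrix.trace_mul_comm]
    rw [Matrix.trace]
    refine Finset.sum_congr rfl fun i _ => ?_
    rw [Matrix.diag_apply, Matrix.mul_apply, hc]
    exact Finset.sum_congr rfl fun k _ => by
      rw [Matrix.conjTranspose_apply, Complex.star_def]
  have hzero : ∀ i, lam i = 0 → c i = 0 := by
    intro i hi
    have h0 : ∑ k, Complex.normSq (V k i) = 0 := by rw [hVcol i, hi]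
    have hV0 : ∀ k, V k i = 0 := by
      intro k
      have := (Finset.sum_eq_zero_iff_of_nonneg
        (fun k _ => Complex.normSq_nonneg (V k i))).1 h0 k (Finset.mem_univ k)
      exact Complex.normSq_eq_zero.1 this
    rw [hc]
    exact Finset.sum_eq_zero fun k _ => by rw [hV0 k, mul_zero]
  have hbound : ∀ i, ‖c i‖ ^ 2 ≤ lam i := by
    intro i
    have := cs_complex (fun k => U k i) (fun k => V k i)
    rw [hUcol i, hVcol i, one_mul] at this
    exact this
  set s : Finset (Fin m) := Finset.univ.filter fun i => lam i ≠ 0 with hs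
  have htr2 : T.trace = ∑ i ∈ s, c i := by
    rw [htrace]
    symm
    refine Finset.sum_subset (Finset.filter_subset _ _) fun i _ hi => ?_
    apply hzero
    by_contra h
    exact hi (Finset.mem_filter.2 ⟨Finset.mem_univ i, h⟩)
  have hcard : s.card = T.rank := by
    rw [hs, ← Fintype.card_subtype, ← hH.rank_eq_card_non_zero_eigs]
    exact Matrix.rank_conjTranspose_mul_self T
  have hsumlam : ∑ i, lam i = ∑ p, ∑ q, Complex.normSq (T p q) := by
    have htr3 : (Vᴴ * V).trace = M.trace := by
      rw [hVV, mul_assoc, Matrix.trace_mul_comm, mul_assoc, hU2, mul_one]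
    have e1 : (Vᴴ * V).trace = ((∑ i, ∑ k, Complex.normSq (V k i) : ℝ) : ℂ) := by
      rw [Matrix.trace]
      push_cast
      refine Finset.sum_congr rfl fun i _ => ?_
      rw [Matrix.diag_apply, Matrix.mul_apply]
      exact Finset.sum_congr rfl fun k _ => by
        rw [Matrix.conjTranspose_apply, conj_mul_self']
    have e2 : M.trace = ((∑ i, ∑ k, Complex.normSq (T k i) : ℝ) : ℂ) := by
      rw [hMdef, Matrix.trace]
      push_cast
      refine Finset.sum_congr rfl fun i _ => ?_
      rw [Matrix.diag_apply, Matrix.mul_apply]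
      exact Finset.sum_congr rfl fun k _ => by
        rw [Matrix.conjTranspose_apply, conj_mul_self']
    have h5 : ((∑ i, ∑ k, Complex.normSq (V k i) : ℝ) : ℂ)
        = ((∑ i, ∑ k, Complex.normSq (T k i) : ℝ) : ℂ) := by
      rw [← e1, ← e2, htr3]
    have h4 : (∑ i, ∑ k, Complex.normSq (V k i)) = ∑ i, ∑ k, Complex.normSq (T k i) :=
      Complex.ofReal_injective h5
    calc ∑ i, lam i = ∑ i, ∑ k, Complex.normSq (V k i) :=
          Finset.sum_congr rfl fun i _ => (hVcol i).symm
      _ = ∑ i, ∑ k, Complex.normSq (T k i) := h4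
      _ = ∑ p, ∑ q, Complex.normSq (T p q) := Finset.sum_comm
  have hlam_nonneg : ∀ i, 0 ≤ lam i := fun i => hPSD.eigenvalues_nonneg i
  calc Complex.normSq T.trace = ‖T.trace‖ ^ 2 := (Complex.sq_norm _).symm
    _ = ‖∑ i ∈ s, c i‖ ^ 2 := by rw [htr2]
    _ ≤ (∑ i ∈ s, ‖c i‖) ^ 2 := by
        exact pow_le_pow_left₀ (norm_nonneg _) (norm_sum_le _ _) 2
    _ ≤ (s.card : ℝ) * ∑ i ∈ s, ‖c i‖ ^ 2 := sq_sum_le_card_mul_sum_sq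
    _ ≤ (s.card : ℝ) * ∑ i ∈ s, lam i := by
        apply mul_le_mul_of_nonneg_left _ (Nat.cast_nonneg _)
        exact Finset.sum_le_sum fun i _ => hbound i
    _ ≤ (s.card : ℝ) * ∑ i, lam i := by
        apply mul_le_mul_of_nonneg_left _ (Nat.cast_nonneg _)
        exact Finset.sum_le_sum_of_subset_of_nonneg (Finset.subset_univ s)
          fun i _ _ => hlam_nonneg i
    _ = (T.rank : ℝ) * ∑ p, ∑ q, Complex.normSq (T p q) := by rw [hcard, hsumlam]


lemma sum_comm4 {α β γ δ M : Type*} [Fintype α] [Fintype β] [Fintype γ] [Fintype δ]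
    [AddCommMonoid M] (f : α → β → γ → δ → M) :
    ∑ s, ∑ t, ∑ j, ∑ k, f s t j k = ∑ j, ∑ k, ∑ s, ∑ t, f s t j k := by
  calc ∑ s, ∑ t, ∑ j, ∑ k, f s t j k
      = ∑ s, ∑ j, ∑ t, ∑ k, f s t j k :=
        Finset.sum_congr rfl fun s _ => Finset.sum_comm
    _ = ∑ j, ∑ s, ∑ t, ∑ k, f s t j k := Finset.sum_comm
    _ = ∑ j, ∑ s, ∑ k, ∑ t, f s t j k :=
        Finset.sum_congr rfl fun j _ => Finset.sum_congr rfl fun s _ => Finset.sum_comm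
    _ = ∑ j, ∑ k, ∑ s, ∑ t, f s t j k :=
        Finset.sum_congr rfl fun j _ => Finset.sum_comm

lemma rank_pos_of_ne_zero {p q : Type*} [Fintype p] [Fintype q] [DecidableEq q]
    (M : Matrix p q ℂ) (h : M ≠ 0) : 0 < M.rank := by
  rw [pos_iff_ne_zero]
  intro h0
  apply h
  have hbot : LinearMap.range M.mulVecLin = ⊥ := by
    rw [← Submodule.finrank_eq_zero (R := ℂ)]
    exact h0
  rw [LinearMap.range_eq_bot] at hbot
  ext i j
  have h1 := congrFun (congrArg DFunLike.coe hbot) (Pi.single j 1)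
  have h2 := congrFun h1 i
  simpa [Matrix.mulVecLin, Matrix.mulVec_single] using h2

theorem compressed_schur_product_lower_bound
    (n k a : ℕ) (hn : 1 ≤ n) (hk : 1 ≤ k) (ha : 1 ≤ a)
    (C : Matrix (Fin k) (Fin n) ℂ) (A B : Matrix (Fin n) (Fin a) ℂ)
    (J : Finset (Fin n)) (hJ : ∀ j, j ∈ J ↔ ∃ i, C i j ≠ 0)
    (SA SB : Matrix J J ℂ)
    (hSA : SA = (A * Aᴴ).submatrix Subtype.val Subtype.val)
    (hSB : SB = (B * Bᴴ).submatrix Subtype.val Subtype.val)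
    (hSA0 : SA ≠ 0) (hSB0 : SB ≠ 0) :
    (C * ((A * Aᴴ).hadamard (B * Bᴴ)) * Cᴴ -
      ((min SA.rank SB.rank : ℕ) : ℂ)⁻¹ •
        (C * vecMulVec (A * Bᵀ).diag (star (A * Bᵀ).diag) * Cᴴ)).PosSemidef := by
  classical
  set H := (A * Aᴴ).hadamard (B * Bᴴ) with hHdef
  set d := (A * Bᵀ).diag with hddef
  set r := min SA.rank SB.rank with hrdef
  have hrA : 0 < SA.rank := rank_pos_of_ne_zero _ hSA0
  have hrB : 0 < SB.rank := rank_pos_of_ne_zero _ hSB0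
  have hrpos : 0 < r := lt_min hrA hrB
  set AJ : Matrix {x // x ∈ J} (Fin a) ℂ := A.submatrix Subtype.val id with hAJ
  set BJ : Matrix {x // x ∈ J} (Fin a) ℂ := B.submatrix Subtype.val id with hBJ
  have hSAfact : SA = AJ * AJᴴ := by
    rw [hSA, Matrix.submatrix_mul A Aᴴ Subtype.val id Subtype.val Function.bijective_id,
      Matrix.conjTranspose_submatrix]
  have hSBfact : SB = BJ * BJᴴ := by
    rw [hSB, Matrix.submatrix_mul B Bᴴ Subtype.val id Subtype.val Function.bijective_id,
      Matrix.conjTranspose_submatrix]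
  have hSArank : SA.rank = AJ.rank := by rw [hSAfact, Matrix.rank_self_mul_conjTranspose]
  have hSBrank : SB.rank = BJ.rank := by rw [hSBfact, Matrix.rank_self_mul_conjTranspose]
  have hHherm : H.IsHermitian := by
    have h1 := Matrix.isHermitian_mul_conjTranspose_self A
    have h2 := Matrix.isHermitian_mul_conjTranspose_self B
    have e1 : ∀ i j, star ((A * Aᴴ) j i) = (A * Aᴴ) i j := fun i j => by
      conv_rhs => rw [← h1]
      rw [Matrix.conjTranspose_apply]
    have e2 : ∀ i j, star ((B * Bᴴ) j i) = (B * Bᴴ) i j := fun i j => by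
      conv_rhs => rw [← h2]
      rw [Matrix.conjTranspose_apply]
    ext i j
    rw [Matrix.conjTranspose_apply, hHdef, Matrix.hadamard_apply, Matrix.hadamard_apply,
      star_mul', e1, e2]
  rw [Matrix.posSemidef_iff_dotProduct_mulVec]
  constructor
  · -- Hermitian
    apply Matrix.IsHermitian.sub
    · exact Matrix.isHermitian_mul_mul_conjTranspose C hHherm
    · have hQ : (vecMulVec d (star d)).IsHermitian := by
        ext i j
        rw [Matrix.conjTranspose_apply, Matrix.vecMulVec_apply, Matrix.vecMulVec_apply,
          star_mul']
        simp [mul_comm]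
      have hCQ := Matrix.isHermitian_mul_mul_conjTranspose C hQ
      rw [Matrix.IsHermitian, Matrix.conjTranspose_smul, hCQ]
      congr 1
      simp
  · intro x
    rw [Matrix.sub_mulVec, dotProduct_sub, Matrix.smul_mulVec,
      dotProduct_smul]
    set z := Cᴴ *ᵥ x with hz
    have sandwich : ∀ (N : Matrix (Fin n) (Fin n) ℂ),
        star x ⬝ᵥ ((C * N * Cᴴ) *ᵥ x) = star z ⬝ᵥ (N *ᵥ z) := by
      intro N
      rw [hz, Matrix.star_mulVec, Matrix.conjTranspose_conjTranspose,
        ← Matrix.dotProduct_mulVec, Matrix.mulVec_mulVec, Matrix.mulVec_mulVec]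
    have hz0 : ∀ j, j ∉ J → z j = 0 := by
      intro j hj
      have hCz : ∀ i, C i j = 0 := by
        intro i; by_contra hc; exact hj ((hJ j).2 ⟨i, hc⟩)
      rw [hz]
      simp [Matrix.mulVec, dotProduct, Matrix.conjTranspose_apply, hCz]
    set T : Matrix (Fin a) (Fin a) ℂ := Aᵀ * Matrix.diagonal (star z) * B with hT
    have hTentry : ∀ s t, T s t = ∑ j, (starRingEnd ℂ) (z j) * A j s * B j t := by
      intro s t
      rw [hT, Matrix.mul_apply]
      refine Finset.sum_congr rfl fun j _ => ?_
      rw [Matrix.mul_diagonal, Matrix.transpose_apply, Pi.star_apply, Complex.star_def]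
      ring
    have hTconj : ∀ s t, (starRingEnd ℂ) (T s t)
        = ∑ j, z j * (starRingEnd ℂ) (A j s) * (starRingEnd ℂ) (B j t) := by
      intro s t
      rw [hTentry s t, map_sum]
      exact Finset.sum_congr rfl fun j _ => by simp [_root_.map_mul]
    -- E1
    have hE1 : star z ⬝ᵥ (H *ᵥ z) = ∑ s, ∑ t, ((Complex.normSq (T s t) : ℝ) : ℂ) := by
      calc star z ⬝ᵥ (H *ᵥ z)
          = ∑ j, ∑ kk, (starRingEnd ℂ) (z j) * z kk *
              ((∑ s, A j s * (starRingEnd ℂ) (A kk s)) *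
               (∑ t, B j t * (starRingEnd ℂ) (B kk t))) := by
            simp only [dotProduct, Matrix.mulVec, hHdef, Matrix.hadamard_apply,
              Matrix.mul_apply, Matrix.conjTranspose_apply, Pi.star_apply, Complex.star_def,
              Finset.mul_sum]
            refine Finset.sum_congr rfl fun j _ => Finset.sum_congr rfl fun kk _ => ?_
            simp only [Finset.sum_mul, Finset.mul_sum]
            exact Finset.sum_congr rfl fun t _ => Finset.sum_congr rfl fun s _ => by ring
        _ = ∑ j, ∑ kk, ∑ s, ∑ t,
              ((starRingEnd ℂ) (z j) * A j s * B j t) *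
              (z kk * (starRingEnd ℂ) (A kk s) * (starRingEnd ℂ) (B kk t)) := by
            refine Finset.sum_congr rfl fun j _ => Finset.sum_congr rfl fun kk _ => ?_
            rw [Finset.sum_mul_sum, Finset.mul_sum]
            refine Finset.sum_congr rfl fun s _ => ?_
            rw [Finset.mul_sum]
            exact Finset.sum_congr rfl fun t _ => by ring
        _ = ∑ s, ∑ t, ∑ j, ∑ kk,
              ((starRingEnd ℂ) (z j) * A j s * B j t) *
              (z kk * (starRingEnd ℂ) (A kk s) * (starRingEnd ℂ) (B kk t)) :=
            (sum_comm4 _)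
        _ = ∑ s, ∑ t, ((Complex.normSq (T s t) : ℝ) : ℂ) := by
            refine Finset.sum_congr rfl fun s _ => Finset.sum_congr rfl fun t _ => ?_
            rw [← Complex.mul_conj (T s t), hTconj s t]
            conv_rhs => rw [hTentry s t]
            rw [Finset.sum_mul_sum]
    -- trace
    have htau : T.trace = star z ⬝ᵥ d := by
      rw [Matrix.trace, dotProduct]
      calc ∑ s, T.diag s = ∑ s, ∑ j, (starRingEnd ℂ) (z j) * A j s * B j s := by
            exact Finset.sum_congr rfl fun s _ => hTentry s s
        _ = ∑ j, ∑ s, (starRingEnd ℂ) (z j) * A j s * B j s := Finset.sum_comm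
        _ = ∑ j, star z j * d j := by
            refine Finset.sum_congr rfl fun j _ => ?_
            rw [hddef, Matrix.diag_apply, Matrix.mul_apply, Finset.mul_sum]
            simp only [Pi.star_apply, Complex.star_def, Matrix.transpose_apply]
            exact Finset.sum_congr rfl fun s _ => by ring
    -- E2
    have hE2 : star z ⬝ᵥ (vecMulVec d (star d) *ᵥ z)
        = ((Complex.normSq T.trace : ℝ) : ℂ) := by
      have lhs : star z ⬝ᵥ (vecMulVec d (star d) *ᵥ z)
          = (star z ⬝ᵥ d) * (star d ⬝ᵥ z) := by
        simp only [dotProduct, Matrix.mulVec, Matrix.vecMulVec_apply,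
          Finset.mul_sum, Finset.sum_mul]
        rw [Finset.sum_comm]
        exact Finset.sum_congr rfl fun j _ => Finset.sum_congr rfl fun kk _ => by ring
      have hconj : star d ⬝ᵥ z = (starRingEnd ℂ) (star z ⬝ᵥ d) := by
        rw [dotProduct, dotProduct, map_sum]
        refine Finset.sum_congr rfl fun j _ => ?_
        simp [Complex.star_def, _root_.map_mul, mul_comm]
      rw [lhs, hconj, ← htau, Complex.mul_conj]
    rw [sandwich, sandwich, hE1, hE2]
    -- rank bound
    have hTfact : T = AJᵀ * Matrix.diagonal (fun j : {x // x ∈ J} => (starRingEnd ℂ) (z j))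
        * BJ := by
      ext s t
      rw [hTentry s t, Matrix.mul_apply]
      have e : ∀ j : {x // x ∈ J},
          (AJᵀ * Matrix.diagonal (fun j : {x // x ∈ J} => (starRingEnd ℂ) (z j))) s j * BJ j t
          = (starRingEnd ℂ) (z j) * A j s * B j t := by
        intro j
        rw [Matrix.mul_diagonal, Matrix.transpose_apply, hAJ, hBJ]
        simp only [Matrix.submatrix_apply, id_eq]
        ring
      rw [Finset.sum_congr rfl fun j _ => e j]
      rw [Finset.sum_coe_sort J (fun j => (starRingEnd ℂ) (z j) * A j s * B j t)]
      symm
      apply Finset.sum_subset (Finset.subset_univ J)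
      intro j _ hj
      rw [hz0 j hj]
      simp
    have hrankT : T.rank ≤ r := by
      apply le_min
      · rw [hSArank, hTfact]
        calc (AJᵀ * Matrix.diagonal (fun j : {x // x ∈ J} => (starRingEnd ℂ) (z j)) * BJ).rank
            ≤ (AJᵀ * Matrix.diagonal (fun j : {x // x ∈ J} => (starRingEnd ℂ) (z j))).rank :=
              Matrix.rank_mul_le_left _ _
          _ ≤ AJᵀ.rank := Matrix.rank_mul_le_left _ _
          _ = AJ.rank := Matrix.rank_transpose AJ
      · rw [hSBrank, hTfact]
        exact Matrix.rank_mul_le_right _ _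
    -- final scalar inequality
    set F : ℝ := ∑ p, ∑ q, Complex.normSq (T p q) with hF
    have hF0 : 0 ≤ F :=
      Finset.sum_nonneg fun p _ => Finset.sum_nonneg fun q _ => Complex.normSq_nonneg _
    have hNle : Complex.normSq T.trace ≤ (r : ℝ) * F := by
      calc Complex.normSq T.trace ≤ (T.rank : ℝ) * F := trace_normSq_le_rank_mul_frob a T
        _ ≤ (r : ℝ) * F := by
            apply mul_le_mul_of_nonneg_right _ hF0
            exact_mod_cast hrankT
    have hcast1 : (∑ s, ∑ t, ((Complex.normSq (T s t) : ℝ) : ℂ)) = ((F : ℝ) : ℂ) := by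
      rw [hF]; push_cast; rfl
    have hcast2 : ((r : ℕ) : ℂ)⁻¹ • ((Complex.normSq T.trace : ℝ) : ℂ)
        = ((((r : ℝ))⁻¹ * Complex.normSq T.trace : ℝ) : ℂ) := by
      push_cast
      rw [smul_eq_mul]
    rw [hcast1, hcast2, ← Complex.ofReal_sub]
    rw [Complex.zero_le_real]
    rw [sub_nonneg]
    have hrpos' : (0 : ℝ) < (r : ℝ) := by exact_mod_cast hrpos
    calc (r : ℝ)⁻¹ * Complex.normSq T.trace ≤ (r : ℝ)⁻¹ * ((r : ℝ) * F) := by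
          apply mul_le_mul_of_nonneg_left hNle (inv_nonneg.2 hrpos'.le)
      _ = F := by field_simp
end

section
/- Let n, l ≥ 1 be integers and let N_1, …, N_{2l} be n × n complex positive semidefinite matrices with N_j = A_j A_j* for nonzero matrices A_j ∈ ℂ^{n×n} (1 ≤ j ≤ 2l). Let w = (d_{A_1 A_{1+l}ᵀ}) ∘ (d_{A_2 A_{2+l}ᵀ}) ∘ ⋯ ∘ (d_{A_l A_{2l}ᵀ}) be the entrywise product of the diagonal vectors of A_j A_{j+l}ᵀ for 1 ≤ j ≤ l. Then N_1 ∘ N_2 ∘ ⋯ ∘ N_{2l} ≥ (∏_{j=1}^{l} 1 / min(rank(N_j), rank(N_{j+l}))) · w w* in the Loewner order. -/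
open Matrix ComplexOrder

section SchurHelpers
open Finset

lemma sum_swap4 {α : Type*} [AddCommMonoid α] {n : ℕ} (f : Fin n → Fin n → Fin n → Fin n → α) :
    ∑ i, ∑ j, ∑ k, ∑ m, f i j k m = ∑ k, ∑ m, ∑ i, ∑ j, f i j k m := by
  have h1 : ∀ i : Fin n, ∑ j, ∑ k, ∑ m, f i j k m = ∑ k, ∑ m, ∑ j, f i j k m := by
    intro i
    rw [Finset.sum_comm]
    exact Finset.sum_congr rfl fun k _ => Finset.sum_comm
  simp_rw [h1]
  rw [Finset.sum_comm]
  exact Finset.sum_congr rfl fun k _ => Finset.sum_comm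

lemma entry_eq {n : ℕ} (A B : Matrix (Fin n) (Fin n) ℂ) (x : Fin n → ℂ) (k m : Fin n) :
    (Aᵀ * (diagonal (star x) * B)) k m = ∑ i, star (x i) * (A i k * B i m) := by
  simp only [mul_apply, transpose_apply, diagonal_apply, Pi.star_apply, ite_mul, zero_mul,
    Finset.sum_ite_eq, Finset.mem_univ, if_true]
  exact Finset.sum_congr rfl fun i _ => by ring_nf

lemma quad_eq {n : ℕ} (A B : Matrix (Fin n) (Fin n) ℂ) (x : Fin n → ℂ) :
    star x ⬝ᵥ ((Matrix.of fun i j => (A * Aᴴ) i j * (B * Bᴴ) i j) *ᵥ x)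
      = ∑ k, ∑ m, ((Aᵀ * (diagonal (star x) * B)) k m) *
          star ((Aᵀ * (diagonal (star x) * B)) k m) := by
  have lhs_eq : star x ⬝ᵥ ((Matrix.of fun i j => (A * Aᴴ) i j * (B * Bᴴ) i j) *ᵥ x)
      = ∑ i, ∑ j, ∑ k, ∑ m,
          (star (x i) * (A i k * B i m)) * (x j * (star (A j k) * star (B j m))) := by
    simp only [dotProduct, mulVec, of_apply, mul_apply, conjTranspose_apply, Pi.star_apply]
    refine Finset.sum_congr rfl fun i _ => ?_
    rw [Finset.mul_sum]
    refine Finset.sum_congr rfl fun j _ => ?_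
    rw [Finset.sum_mul_sum]
    rw [Finset.sum_mul, Finset.mul_sum]
    refine Finset.sum_congr rfl fun k _ => ?_
    rw [Finset.sum_mul, Finset.mul_sum]
    refine Finset.sum_congr rfl fun m _ => ?_
    simp only [RCLike.star_def]
    ring
  rw [lhs_eq, sum_swap4]
  refine Finset.sum_congr rfl fun k _ => Finset.sum_congr rfl fun m _ => ?_
  rw [entry_eq]
  rw [star_sum, Finset.sum_mul_sum]
  refine Finset.sum_congr rfl fun i _ => Finset.sum_congr rfl fun j _ => ?_
  simp only [star_mul', star_star]

lemma frob_eq_trace {n : ℕ} (Y : Matrix (Fin n) (Fin n) ℂ) :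
    ((∑ p, ∑ q, Complex.normSq (Y p q) : ℝ) : ℂ) = (Yᴴ * Y).trace := by
  rw [Matrix.trace]
  simp only [Matrix.diag_apply, Matrix.mul_apply, Matrix.conjTranspose_apply]
  rw [Finset.sum_comm]
  push_cast
  refine Finset.sum_congr rfl fun p _ => Finset.sum_congr rfl fun q _ => ?_
  rw [Complex.star_def, mul_comm, Complex.mul_conj]

set_option maxHeartbeats 1000000 in
lemma normSq_trace_le_rank_mul_frob {n : ℕ} (M : Matrix (Fin n) (Fin n) ℂ) :
    Complex.normSq M.trace ≤ (M.rank : ℝ) * ∑ k, ∑ m, Complex.normSq (M k m) := by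
  classical
  set r := M.rank with hr
  have hrn : r ≤ n := M.rank_le_card_width.trans (by simp)
  set K : Submodule ℂ (EuclideanSpace ℂ (Fin n)) := LinearMap.range (Matrix.toEuclideanLin M) with hK
  have hfr : Module.finrank ℂ K = r := by
    rw [hr, Matrix.rank_eq_finrank_range_toLin M (PiLp.basisFun 2 ℂ (Fin n)) (PiLp.basisFun 2 ℂ (Fin n))]
    rfl
  let b1 : OrthonormalBasis (Fin r) ℂ K := (stdOrthonormalBasis ℂ K).reindex (finCongr hfr)
  let v : Fin n → EuclideanSpace ℂ (Fin n) :=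
    fun i => if h : (i : ℕ) < r then (b1 ⟨i, h⟩ : EuclideanSpace ℂ (Fin n)) else 0
  set s : Set (Fin n) := {i | (i : ℕ) < r} with hs
  have hvon : Orthonormal ℂ (s.restrict v) := by
    rw [orthonormal_iff_ite]
    rintro ⟨i, hi⟩ ⟨j, hj⟩
    have hvi : v i = (b1 ⟨i, hi⟩ : EuclideanSpace ℂ (Fin n)) := dif_pos hi
    have hvj : v j = (b1 ⟨j, hj⟩ : EuclideanSpace ℂ (Fin n)) := dif_pos hj
    show (inner ℂ (v i) (v j) : ℂ) = _
    rw [hvi, hvj]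
    rw [← Submodule.coe_inner, orthonormal_iff_ite.mp b1.orthonormal]
    simp [Fin.mk.injEq, Subtype.mk.injEq, Fin.val_inj]
  obtain ⟨b, hb⟩ := hvon.exists_orthonormalBasis_extension_of_card_eq (by simp)
  -- the unitary matrix whose columns are b
  set U : Matrix (Fin n) (Fin n) ℂ := Matrix.of (fun i p => b p i) with hUdef
  have hU : Uᴴ * U = 1 := by
    ext p q
    simp only [Matrix.mul_apply, Matrix.conjTranspose_apply, Matrix.of_apply, Matrix.one_apply,
      hUdef]
    have := orthonormal_iff_ite.mp b.orthonormal p q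
    rw [PiLp.inner_apply] at this
    simpa [RCLike.inner_apply, mul_comm] using this
  have hUU : U * Uᴴ = 1 := mul_eq_one_comm.mp hU
  set X : Matrix (Fin n) (Fin n) ℂ := Uᴴ * M * U with hXdef
  have htr : X.trace = M.trace := by
    rw [hXdef, Matrix.trace_mul_cycle, hUU, Matrix.one_mul]
  have hfrob : (∑ p, ∑ q, Complex.normSq (X p q) : ℝ) = ∑ p, ∑ q, Complex.normSq (M p q) := by
    have cancel : ∀ Z : Matrix (Fin n) (Fin n) ℂ, U * (Uᴴ * Z) = Z := fun Z => by
      rw [← Matrix.mul_assoc, hUU, Matrix.one_mul]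
    have h1 : Xᴴ * X = Uᴴ * (Mᴴ * M) * U := by
      rw [hXdef]
      simp only [Matrix.conjTranspose_mul, Matrix.conjTranspose_conjTranspose, Matrix.mul_assoc,
        cancel]
    have h2 : (Xᴴ * X).trace = (Mᴴ * M).trace := by
      rw [h1, Matrix.trace_mul_cycle, ← Matrix.mul_assoc, hUU, Matrix.one_mul]
    have := (frob_eq_trace X).trans (h2.trans (frob_eq_trace M).symm)
    exact_mod_cast this
  -- diagonal entries of X vanish outside the first r
  have hbq : ∀ q : Fin r, (b1 q : EuclideanSpace ℂ (Fin n)) = b ⟨q.1, lt_of_lt_of_le q.2 hrn⟩ := by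
    intro q
    rw [hb _ (show (⟨q.1, lt_of_lt_of_le q.2 hrn⟩ : Fin n) ∈ s from q.2)]
    simp only [v, dif_pos (show ((⟨q.1, lt_of_lt_of_le q.2 hrn⟩ : Fin n) : ℕ) < r from q.2)]
  have hdiag0 : ∀ p : Fin n, ¬((p : ℕ) < r) → X p p = 0 := by
    intro p hp
    have hXpp : X p p = (inner ℂ (b p) (Matrix.toEuclideanLin M (b p)) : ℂ) := by
      rw [PiLp.inner_apply]
      simp only [hXdef, Matrix.mul_apply, Matrix.conjTranspose_apply, Matrix.of_apply, hUdef,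
        RCLike.inner_apply, Matrix.ofLp_toLpLin, Matrix.toLin'_apply, Matrix.mulVec, dotProduct]
      simp only [Finset.sum_mul]
      rw [Finset.sum_comm]
      refine Finset.sum_congr rfl fun i _ => ?_
      refine Finset.sum_congr rfl fun j _ => ?_
      simp only [RCLike.star_def]
      ring
    have hmem : Matrix.toEuclideanLin M (b p) ∈ K := LinearMap.mem_range_self _ _
    set y : K := ⟨Matrix.toEuclideanLin M (b p), hmem⟩ with hy
    have hrepr := b1.sum_repr y
    have hcoe : (Matrix.toEuclideanLin M (b p) : EuclideanSpace ℂ (Fin n))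
        = ∑ q : Fin r, (b1.repr y q) • (b1 q : EuclideanSpace ℂ (Fin n)) := by
      have := congrArg (K.subtype) hrepr
      simpa [map_sum] using this.symm
    rw [hXpp, hcoe, inner_sum]
    refine Finset.sum_eq_zero fun q _ => ?_
    rw [inner_smul_right, hbq q, orthonormal_iff_ite.mp b.orthonormal]
    have hne : p ≠ ⟨q.1, lt_of_lt_of_le q.2 hrn⟩ := by
      intro h
      exact hp (by rw [h]; exact q.2)
    simp [hne]
  -- now the Cauchy-Schwarz estimate
  set t : Finset (Fin n) := Finset.univ.filter (fun p => (p : ℕ) < r) with ht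
  have htcard : (t.card : ℝ) ≤ (r : ℝ) := by
    have heq : t = Finset.map (Fin.castLEEmb hrn) Finset.univ := by
      ext p
      simp only [ht, Finset.mem_filter, Finset.mem_univ, true_and, Finset.mem_map,
        Fin.castLEEmb_apply]
      constructor
      · intro hp
        exact ⟨⟨p.1, hp⟩, by ext; simp [Fin.castLE]⟩
      · rintro ⟨q, rfl⟩
        simpa [Fin.castLE] using q.2
    rw [heq, Finset.card_map, Finset.card_univ, Fintype.card_fin]
  have hsum : M.trace = ∑ p ∈ t, X p p := by
    rw [← htr, Matrix.trace]
    simp only [Matrix.diag_apply]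
    exact (Finset.sum_filter_of_ne (fun p _ hne => by
      by_contra hlt; exact hne (hdiag0 p hlt))).symm
  have step1 : Complex.normSq M.trace ≤ (t.card : ℝ) * ∑ p ∈ t, ‖X p p‖ ^ 2 := by
    rw [Complex.normSq_eq_norm_sq, hsum]
    calc ‖∑ p ∈ t, X p p‖ ^ 2 ≤ (∑ p ∈ t, ‖X p p‖) ^ 2 := by
          apply pow_le_pow_left₀ (norm_nonneg _) (norm_sum_le _ _)
      _ ≤ (t.card : ℝ) * ∑ p ∈ t, ‖X p p‖ ^ 2 := sq_sum_le_card_mul_sum_sq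
  have step2 : ∑ p ∈ t, ‖X p p‖ ^ 2 ≤ ∑ p, ∑ q, Complex.normSq (X p q) := by
    rw [Finset.sum_comm]
    calc ∑ p ∈ t, ‖X p p‖ ^ 2 ≤ ∑ p ∈ t, ∑ q, Complex.normSq (X q p) := by
          refine Finset.sum_le_sum fun p _ => ?_
          have hxx : ‖X p p‖ ^ 2 = Complex.normSq (X p p) := by
            rw [Complex.normSq_eq_norm_sq]
          rw [hxx]
          exact Finset.single_le_sum (f := fun q => Complex.normSq (X q p))
            (fun q _ => Complex.normSq_nonneg _) (Finset.mem_univ p)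
      _ ≤ ∑ p, ∑ q, Complex.normSq (X q p) := by
          refine Finset.sum_le_sum_of_subset_of_nonneg (Finset.filter_subset _ _)
            fun p _ _ => Finset.sum_nonneg fun q _ => Complex.normSq_nonneg _
  calc Complex.normSq M.trace ≤ (t.card : ℝ) * ∑ p ∈ t, ‖X p p‖ ^ 2 := step1
    _ ≤ (r : ℝ) * ∑ p ∈ t, ‖X p p‖ ^ 2 := by
        apply mul_le_mul_of_nonneg_right htcard
        exact Finset.sum_nonneg fun p _ => sq_nonneg _
    _ ≤ (r : ℝ) * ∑ p, ∑ q, Complex.normSq (X p q) := by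
        apply mul_le_mul_of_nonneg_left step2 (by positivity)
    _ = (r : ℝ) * ∑ k, ∑ m, Complex.normSq (M k m) := by rw [hfrob]

lemma natCast_inv_nonneg (m : ℕ) : 0 ≤ ((m : ℂ))⁻¹ := by
  rw [show ((m : ℂ)) = ((m : ℝ) : ℂ) by push_cast; ring, ← Complex.ofReal_inv]
  exact Complex.zero_le_real.mpr (inv_nonneg.mpr (Nat.cast_nonneg m))

lemma rank_pos_of_ne_zero_s10 {n : ℕ} (M : Matrix (Fin n) (Fin n) ℂ) (hM : M ≠ 0) : 0 < M.rank := by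
  rcases Nat.eq_zero_or_pos M.rank with h | h
  · exfalso
    apply hM
    have h0 : LinearMap.range M.mulVecLin = ⊥ := Submodule.finrank_eq_zero.mp h
    have h1 : M.mulVecLin = 0 := LinearMap.range_eq_bot.mp h0
    ext i j
    have h2 := congrFun (congrFun (congrArg DFunLike.coe h1) (Pi.single j 1)) i
    simpa [Matrix.mulVecLin_apply, Matrix.mulVec_single] using h2
  · exact h

lemma hadamard_isHermitian {n : ℕ} {X Y : Matrix (Fin n) (Fin n) ℂ}
    (hX : X.IsHermitian) (hY : Y.IsHermitian) :
    (Matrix.of fun i j => X i j * Y i j).IsHermitian := by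
  ext i j
  have h1 : star (X j i) = X i j := by
    rw [← Matrix.conjTranspose_apply]; rw [hX]
  have h2 : star (Y j i) = Y i j := by
    rw [← Matrix.conjTranspose_apply]; rw [hY]
  simp only [Matrix.conjTranspose_apply, Matrix.of_apply, star_mul', h1, h2]

open scoped MatrixOrder in
lemma hadamard_posSemidef {n : ℕ} {X Y : Matrix (Fin n) (Fin n) ℂ}
    (hX : X.PosSemidef) (hY : Y.PosSemidef) :
    (Matrix.of fun i j => X i j * Y i j).PosSemidef := by
  obtain ⟨P, hP⟩ := CStarAlgebra.nonneg_iff_eq_star_mul_self.mp hX.nonneg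
  obtain ⟨Q, hQ⟩ := CStarAlgebra.nonneg_iff_eq_star_mul_self.mp hY.nonneg
  refine .of_dotProduct_mulVec_nonneg (hadamard_isHermitian hX.1 hY.1) fun x => ?_
  have h1 : X = Pᴴ * (Pᴴ)ᴴ := by rw [Matrix.conjTranspose_conjTranspose]; exact hP
  have h2 : Y = Qᴴ * (Qᴴ)ᴴ := by rw [Matrix.conjTranspose_conjTranspose]; exact hQ
  rw [h1, h2, quad_eq]
  exact Finset.sum_nonneg fun k _ => Finset.sum_nonneg fun m _ => mul_star_self_nonneg _

lemma vmv_isHermitian {n : ℕ} (u : Fin n → ℂ) :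
    (vecMulVec u (star u)).IsHermitian := by
  ext i j
  simp only [Matrix.conjTranspose_apply, Matrix.vecMulVec_apply, Pi.star_apply, star_mul',
    star_star]
  ring

lemma vmv_quad {n : ℕ} (u x : Fin n → ℂ) :
    star x ⬝ᵥ (vecMulVec u (star u) *ᵥ x) = (star x ⬝ᵥ u) * star (star x ⬝ᵥ u) := by
  simp only [dotProduct, Matrix.mulVec, Matrix.vecMulVec_apply, Pi.star_apply,
    star_sum, star_mul', star_star]
  rw [Finset.sum_mul_sum]
  refine Finset.sum_congr rfl fun i _ => ?_
  rw [Finset.mul_sum]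
  refine Finset.sum_congr rfl fun j _ => ?_
  ring

lemma vmv_posSemidef {n : ℕ} (u : Fin n → ℂ) :
    (vecMulVec u (star u)).PosSemidef :=
  .of_dotProduct_mulVec_nonneg (vmv_isHermitian u) fun x => by rw [vmv_quad]; exact mul_star_self_nonneg _

lemma star_of_nonneg {a : ℂ} (ha : 0 ≤ a) : star a = a := by
  have him : a.im = 0 := by
    have := Complex.le_def.mp ha
    simpa using this.2.symm
  apply Complex.ext <;> simp [him]

lemma smul_posSemidef {n : ℕ} {a : ℂ} (ha : 0 ≤ a) {X : Matrix (Fin n) (Fin n) ℂ}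
    (hX : X.PosSemidef) : (a • X).PosSemidef := by
  refine .of_dotProduct_mulVec_nonneg ?_ fun x => ?_
  · have : (a • X)ᴴ = star a • Xᴴ := Matrix.conjTranspose_smul a X
    rw [Matrix.IsHermitian, this, star_of_nonneg ha, hX.1]
  · rw [Matrix.smul_mulVec, dotProduct_smul, smul_eq_mul]
    exact mul_nonneg ha (hX.dotProduct_mulVec_nonneg x)

lemma combine {n : ℕ} {X Y : Matrix (Fin n) (Fin n) ℂ} {u v : Fin n → ℂ} {a c : ℂ}
    (ha : 0 ≤ a) (hc : 0 ≤ c)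
    (hX : (X - a • vecMulVec u (star u)).PosSemidef)
    (hY : (Y - c • vecMulVec v (star v)).PosSemidef) :
    ((Matrix.of fun i j => X i j * Y i j) -
      (a * c) • vecMulVec (fun i => u i * v i) (star fun i => u i * v i)).PosSemidef := by
  have hY' : Y.PosSemidef := by
    have := hY.add (smul_posSemidef hc (vmv_posSemidef v))
    simpa using this
  have key : (Matrix.of fun i j => X i j * Y i j) -
      (a * c) • vecMulVec (fun i => u i * v i) (star fun i => u i * v i)
      = (Matrix.of fun i j => (X - a • vecMulVec u (star u)) i j * Y i j) +
        (Matrix.of fun i j =>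
          (a • vecMulVec u (star u)) i j * (Y - c • vecMulVec v (star v)) i j) := by
    ext i j
    simp only [Matrix.sub_apply, Matrix.add_apply, Matrix.of_apply, Matrix.smul_apply,
      Matrix.vecMulVec_apply, Pi.star_apply, smul_eq_mul, star_mul']
    ring
  rw [key]
  exact (hadamard_posSemidef hX hY').add
    (hadamard_posSemidef (smul_posSemidef ha (vmv_posSemidef u)) hY)

lemma many {n l : ℕ} (M : Fin l → Matrix (Fin n) (Fin n) ℂ) (c : Fin l → ℂ) (d : Fin l → Fin n → ℂ)
    (hc : ∀ t, 0 ≤ c t)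
    (h : ∀ t, (M t - c t • vecMulVec (d t) (star (d t))).PosSemidef)
    (s : Finset (Fin l)) :
    ((Matrix.of fun i j => ∏ t ∈ s, M t i j) -
      (∏ t ∈ s, c t) • vecMulVec (fun i => ∏ t ∈ s, d t i)
        (star fun i => ∏ t ∈ s, d t i)).PosSemidef := by
  classical
  induction s using Finset.induction with
  | empty =>
      have h0 : (Matrix.of fun i j : Fin n => ∏ t ∈ (∅ : Finset (Fin l)), M t i j) -
          (∏ t ∈ (∅ : Finset (Fin l)), c t) •
            vecMulVec (fun i => ∏ t ∈ (∅ : Finset (Fin l)), d t i)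
              (star fun i => ∏ t ∈ (∅ : Finset (Fin l)), d t i) = 0 := by
        ext i j
        simp [Matrix.vecMulVec_apply]
      rw [h0]
      exact Matrix.PosSemidef.zero
  | @insert t₀ s hts ih =>
      have key := combine (hc t₀) (Finset.prod_nonneg fun t _ => hc t) (h t₀) ih
      simp only [Finset.prod_insert hts]
      exact key

lemma base_psd {n : ℕ} (A B : Matrix (Fin n) (Fin n) ℂ) (hA : A ≠ 0) (hB : B ≠ 0) :
    ((Matrix.of fun i j => (A * Aᴴ) i j * (B * Bᴴ) i j) -
      (((min (A * Aᴴ).rank (B * Bᴴ).rank : ℕ) : ℂ))⁻¹ •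
        vecMulVec (fun i => (A * Bᵀ) i i) (star fun i => (A * Bᵀ) i i)).PosSemidef := by
  set r : ℕ := min (A * Aᴴ).rank (B * Bᴴ).rank with hrdef
  set d : Fin n → ℂ := fun i => (A * Bᵀ) i i with hd
  have hrA : (A * Aᴴ).rank = A.rank := A.rank_self_mul_conjTranspose
  have hrB : (B * Bᴴ).rank = B.rank := B.rank_self_mul_conjTranspose
  have hrpos : 0 < r := by
    rw [hrdef, hrA, hrB]
    exact lt_min (rank_pos_of_ne_zero_s10 A hA) (rank_pos_of_ne_zero_s10 B hB)
  rw [Matrix.posSemidef_iff_dotProduct_mulVec]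
  constructor
  · apply Matrix.IsHermitian.sub
    · exact hadamard_isHermitian (Matrix.posSemidef_self_mul_conjTranspose A).1
        (Matrix.posSemidef_self_mul_conjTranspose B).1
    · have hst : star (((r : ℕ) : ℂ))⁻¹ = (((r : ℕ) : ℂ))⁻¹ :=
        star_of_nonneg (natCast_inv_nonneg r)
      show ((((r : ℕ) : ℂ))⁻¹ • vecMulVec d (star d))ᴴ
        = (((r : ℕ) : ℂ))⁻¹ • vecMulVec d (star d)
      rw [Matrix.conjTranspose_smul, hst, vmv_isHermitian d]
  · intro x
    set S : Matrix (Fin n) (Fin n) ℂ := Aᵀ * (diagonal (star x) * B) with hS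
    have hq1 : star x ⬝ᵥ ((Matrix.of fun i j => (A * Aᴴ) i j * (B * Bᴴ) i j) *ᵥ x)
        = ((∑ k, ∑ m, Complex.normSq (S k m) : ℝ) : ℂ) := by
      rw [quad_eq]
      push_cast
      refine Finset.sum_congr rfl fun k _ => Finset.sum_congr rfl fun m _ => ?_
      rw [Complex.star_def, Complex.mul_conj]
    have htr : star x ⬝ᵥ d = S.trace := by
      have hdi : ∀ i, d i = ∑ k, A i k * B i k := fun i => by
        simp [hd, Matrix.mul_apply, Matrix.transpose_apply]
      have hSkk : ∀ k, S k k = ∑ i, star (x i) * (A i k * B i k) := fun k => entry_eq A B x k k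
      rw [Matrix.trace]
      simp only [Matrix.diag_apply, hSkk]
      simp only [dotProduct, Pi.star_apply, hdi]
      rw [Finset.sum_comm]
      refine Finset.sum_congr rfl fun i _ => ?_
      rw [Finset.mul_sum]
    have hq2 : star x ⬝ᵥ ((vecMulVec d (star d)) *ᵥ x) = ((Complex.normSq S.trace : ℝ) : ℂ) := by
      rw [vmv_quad, htr, Complex.star_def, Complex.mul_conj]
    rw [Matrix.sub_mulVec, dotProduct_sub, Matrix.smul_mulVec,
      dotProduct_smul, hq1, hq2, smul_eq_mul]
    have hrankS : (S.rank : ℝ) ≤ (r : ℝ) := by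
      have h1 : S.rank ≤ A.rank := by
        have h := Matrix.rank_mul_le_left Aᵀ (diagonal (star x) * B)
        rwa [Matrix.rank_transpose] at h
      have h2 : S.rank ≤ B.rank :=
        (Matrix.rank_mul_le_right _ _).trans (Matrix.rank_mul_le_right _ _)
      have : S.rank ≤ r := by
        rw [hrdef, hrA, hrB]
        exact le_min h1 h2
      exact_mod_cast this
    have hFnonneg : 0 ≤ ∑ k, ∑ m, Complex.normSq (S k m) :=
      Finset.sum_nonneg fun k _ => Finset.sum_nonneg fun m _ => Complex.normSq_nonneg _
    have hkey : (r : ℝ)⁻¹ * Complex.normSq S.trace ≤ ∑ k, ∑ m, Complex.normSq (S k m) := by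
      rw [inv_mul_le_iff₀ (by exact_mod_cast hrpos)]
      calc Complex.normSq S.trace
          ≤ (S.rank : ℝ) * ∑ k, ∑ m, Complex.normSq (S k m) := normSq_trace_le_rank_mul_frob S
        _ ≤ (r : ℝ) * ∑ k, ∑ m, Complex.normSq (S k m) :=
            mul_le_mul_of_nonneg_right hrankS hFnonneg
    have hcast : (((r : ℕ) : ℂ))⁻¹ * ((Complex.normSq S.trace : ℝ) : ℂ)
        = (((r : ℝ)⁻¹ * Complex.normSq S.trace : ℝ) : ℂ) := by push_cast; ring
    rw [hcast, ← Complex.ofReal_sub]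
    exact Complex.zero_le_real.mpr (sub_nonneg.mpr hkey)

end SchurHelpers

theorem schur_product_lower_bound_many_factors
    (n l : ℕ) (hn : 1 ≤ n) (hl : 1 ≤ l)
    (A B : Fin l → Matrix (Fin n) (Fin n) ℂ)
    (hA : ∀ t, A t ≠ 0) (hB : ∀ t, B t ≠ 0)
    (N : Fin l → Matrix (Fin n) (Fin n) ℂ) (N' : Fin l → Matrix (Fin n) (Fin n) ℂ)
    (hN : ∀ t, N t = A t * (A t)ᴴ) (hN' : ∀ t, N' t = B t * (B t)ᴴ)
    (w : Fin n → ℂ) (hw : w = fun i => ∏ t, (A t * (B t)ᵀ) i i) :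
    ((Matrix.of fun i j : Fin n => ∏ t, (N t i j * N' t i j)) -
      (∏ t, ((min (N t).rank (N' t).rank : ℕ) : ℂ)⁻¹) •
        vecMulVec w (star w)).PosSemidef := by
  have key := many (fun t => Matrix.of fun i j => (A t * (A t)ᴴ) i j * (B t * (B t)ᴴ) i j)
      (fun t => ((min (A t * (A t)ᴴ).rank (B t * (B t)ᴴ).rank : ℕ) : ℂ)⁻¹)
      (fun t i => (A t * (B t)ᵀ) i i)
      (fun t => natCast_inv_nonneg _)
      (fun t => base_psd (A t) (B t) (hA t) (hB t)) Finset.univ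
  subst hw
  simp only [hN, hN']
  exact key
end

section
/- Let n, k ≥ 1 and fix vectors u_1, y_1, …, u_k, y_k ∈ ℂ^n such that the vector w = (u_1 ∘ y_1) ∘ ⋯ ∘ (u_k ∘ y_k) is nonzero; let J(w) = {j : w_j ≠ 0}. Let M_1, …, M_k be n × n complex positive semidefinite matrices, set M = M_1 ∘ ⋯ ∘ M_k, and assume the principal submatrix M_{J(w)×J(w)} is nonzero. Then (D_{u_1} M_1 D_{u_1}* ∘ D_{y_1} conj(M_1) D_{y_1}*) ∘ ⋯ ∘ (D_{u_k} M_k D_{u_k}* ∘ D_{y_k} conj(M_k) D_{y_k}*) ≥ (1 / rank(M_{J(w)×J(w)})) · z z* in the Loewner order, where z = w ∘ d_{M_1} ∘ ⋯ ∘ d_{M_k}. -/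
open Matrix ComplexOrder Finset

/-- Rank-one decomposition of a PSD complex matrix, with support of size `rank`. -/
lemma psd_decomp {m : Type*} [Fintype m] [DecidableEq m] {P : Matrix m m ℂ}
    (hP : P.PosSemidef) :
    ∃ (T : Finset m) (v : m → m → ℂ), T.card = P.rank ∧
      (∀ i j, P i j = ∑ l, v l i * (starRingEnd ℂ) (v l j)) ∧
      (∀ l, l ∉ T → v l = 0) := by
  have hH := hP.1
  refine ⟨Finset.univ.filter (fun l => hH.eigenvalues l ≠ 0),
    fun l i => ((Real.sqrt (hH.eigenvalues l) : ℝ) : ℂ) * (hH.eigenvectorUnitary : Matrix m m ℂ) i l,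
    ?_, ?_, ?_⟩
  · rw [hH.rank_eq_card_non_zero_eigs, Fintype.card_subtype]
  · intro i j
    nth_rewrite 1 [hH.spectral_theorem]
    rw [Unitary.conjStarAlgAut_apply]
    rw [Matrix.mul_apply]
    refine Finset.sum_congr rfl fun l _ => ?_
    rw [Matrix.mul_diagonal, Matrix.star_apply, RCLike.star_def]
    have h2 : ((Real.sqrt (hH.eigenvalues l) : ℝ) : ℂ) *
        ((Real.sqrt (hH.eigenvalues l) : ℝ) : ℂ) = ((hH.eigenvalues l : ℝ) : ℂ) := by
      rw [← Complex.ofReal_mul, Real.mul_self_sqrt (hP.eigenvalues_nonneg l)]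
    rw [_root_.map_mul, Complex.conj_ofReal]
    have h3 : (RCLike.ofReal ∘ hH.eigenvalues) l = ((hH.eigenvalues l : ℝ) : ℂ) := rfl
    rw [h3, ← h2]
    ring
  · intro l hl
    simp only [Finset.mem_filter, Finset.mem_univ, true_and, not_not] at hl
    funext i
    simp [hl]

/-- Schur product theorem (binary). -/
lemma psd_schur {m : Type*} [Fintype m] [DecidableEq m] {A B : Matrix m m ℂ}
    (hA : A.PosSemidef) (hB : B.PosSemidef) :
    (Matrix.of fun i j => A i j * B i j).PosSemidef := by
  obtain ⟨T, v, -, hBij, -⟩ := psd_decomp hB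
  rw [posSemidef_iff_dotProduct_mulVec]
  constructor
  · ext i j
    simp only [conjTranspose_apply, Matrix.of_apply, star_mul']
    rw [hA.1.apply i j, hB.1.apply i j, mul_comm]
  · intro x
    have key : star x ⬝ᵥ ((Matrix.of fun i j => A i j * B i j) *ᵥ x)
        = ∑ l, star (fun j => (starRingEnd ℂ) (v l j) * x j) ⬝ᵥ
            (A *ᵥ fun j => (starRingEnd ℂ) (v l j) * x j) := by
      simp only [dotProduct, mulVec, Matrix.of_apply, Pi.star_apply, RCLike.star_def]
      calc ∑ i, (starRingEnd ℂ) (x i) * ∑ j, A i j * B i j * x j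
          = ∑ i, ∑ j, ∑ l, (v l i * (starRingEnd ℂ) (x i)) *
              (A i j * ((starRingEnd ℂ) (v l j) * x j)) := by
            refine Finset.sum_congr rfl fun i _ => ?_
            rw [Finset.mul_sum]
            refine Finset.sum_congr rfl fun j _ => ?_
            rw [hBij i j, Finset.mul_sum, Finset.sum_mul, Finset.mul_sum]
            exact Finset.sum_congr rfl fun l _ => by ring
        _ = ∑ i, ∑ l, ∑ j, (v l i * (starRingEnd ℂ) (x i)) *
              (A i j * ((starRingEnd ℂ) (v l j) * x j)) :=
            Finset.sum_congr rfl fun i _ => Finset.sum_comm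
        _ = ∑ l, ∑ i, ∑ j, (v l i * (starRingEnd ℂ) (x i)) *
              (A i j * ((starRingEnd ℂ) (v l j) * x j)) := Finset.sum_comm
        _ = _ := by
            refine Finset.sum_congr rfl fun l _ => Finset.sum_congr rfl fun i _ => ?_
            rw [_root_.map_mul, Complex.conj_conj, Finset.mul_sum]
    rw [key]
    exact Finset.sum_nonneg fun l _ => hA.dotProduct_mulVec_nonneg _

/-- Entrywise products of PSD matrices are PSD. -/
lemma psd_prod {m : Type*} [Fintype m] [DecidableEq m] {ι : Type*} (F : Finset ι)
    (M : ι → Matrix m m ℂ) (hM : ∀ t, (M t).PosSemidef) :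
    (Matrix.of fun i j => ∏ t ∈ F, M t i j).PosSemidef := by
  classical
  induction F using Finset.induction_on with
  | empty =>
    rw [posSemidef_iff_dotProduct_mulVec]
    constructor
    · ext i j
      simp
    · intro x
      have h1 : ((Matrix.of fun _ _ : m => (1:ℂ)) *ᵥ x) = fun _ => ∑ j, x j := by
        funext i; simp [mulVec, dotProduct]
      have h2 : star x ⬝ᵥ (fun _ : m => ∑ j, x j) = star (∑ j, x j) * ∑ j, x j := by
        simp only [dotProduct, Pi.star_apply, RCLike.star_def, ← Finset.sum_mul, map_sum]
      simp only [Finset.prod_empty, h1, h2]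
      exact star_mul_self_nonneg _
  | @insert a s ha ih =>
    have h : (Matrix.of fun i j => ∏ t ∈ insert a s, M t i j)
        = Matrix.of fun i j => M a i j * ((Matrix.of fun i j => ∏ t ∈ s, M t i j) i j) := by
      ext i j
      simp [Finset.prod_insert ha]
    rw [h]
    exact psd_schur (hM a) ih

lemma psd_rank_pos {m : Type*} [Fintype m] [DecidableEq m] {P : Matrix m m ℂ}
    (hP : P.PosSemidef) (h0 : P ≠ 0) : 1 ≤ P.rank := by
  by_contra h
  push_neg at h
  have hr0 : P.rank = 0 := by omega
  obtain ⟨T, v, hT, hPij, hv0⟩ := psd_decomp hP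
  have hTe : T = ∅ := Finset.card_eq_zero.mp (hT.trans hr0)
  apply h0
  ext i j
  rw [hPij i j]
  refine (Finset.sum_eq_zero fun l _ => ?_).trans rfl
  have : v l = 0 := hv0 l (by simp [hTe])
  simp [this]

/-- Core inequality. -/
lemma core_ineq {m : Type*} [Fintype m] [DecidableEq m] {P : Matrix m m ℂ}
    (hP : P.PosSemidef) (hr : 1 ≤ P.rank) (g : m → ℂ) :
    ((P.rank : ℂ))⁻¹ * ((∑ i, g i * P i i) * (starRingEnd ℂ) (∑ i, g i * P i i)) ≤
      ∑ i, ∑ j, g i * (starRingEnd ℂ) (g j) * (P i j * (starRingEnd ℂ) (P i j)) := by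
  obtain ⟨T, v, hT, hPij, hv0⟩ := psd_decomp hP
  set c : m → m → ℂ := fun l p => ∑ i, g i * (v l i * (starRingEnd ℂ) (v p i)) with hc
  have hdiag : ∑ i, g i * P i i = ∑ l ∈ T, c l l := by
    calc ∑ i, g i * P i i = ∑ i, ∑ l, g i * (v l i * (starRingEnd ℂ) (v l i)) := by
          refine Finset.sum_congr rfl fun i _ => ?_
          rw [hPij i i, Finset.mul_sum]
      _ = ∑ l, ∑ i, g i * (v l i * (starRingEnd ℂ) (v l i)) := Finset.sum_comm
      _ = ∑ l, c l l := by simp only [hc]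
      _ = ∑ l ∈ T, c l l := by
          symm
          apply Finset.sum_subset (Finset.subset_univ T)
          intro l _ hl
          simp [hc, hv0 l hl]
  have hquad : (∑ i, ∑ j, g i * (starRingEnd ℂ) (g j) * (P i j * (starRingEnd ℂ) (P i j)))
      = ∑ l, ∑ p, c l p * (starRingEnd ℂ) (c l p) := by
    have expand1 : ∀ i j, g i * (starRingEnd ℂ) (g j) * (P i j * (starRingEnd ℂ) (P i j))
        = ∑ l, ∑ p, (g i * (v l i * (starRingEnd ℂ) (v p i))) *
            (starRingEnd ℂ) (g j * (v l j * (starRingEnd ℂ) (v p j))) := by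
      intro i j
      rw [hPij i j]
      rw [show (starRingEnd ℂ) (∑ l, v l i * (starRingEnd ℂ) (v l j))
          = ∑ p, (starRingEnd ℂ) (v p i) * v p j by
        rw [map_sum]
        exact Finset.sum_congr rfl fun p _ => by rw [_root_.map_mul, Complex.conj_conj]]
      rw [Finset.sum_mul_sum, Finset.mul_sum]
      refine Finset.sum_congr rfl fun l _ => ?_
      rw [Finset.mul_sum]
      refine Finset.sum_congr rfl fun p _ => ?_
      simp only [_root_.map_mul, Complex.conj_conj]
      ring
    have factor : ∀ l p, c l p * (starRingEnd ℂ) (c l p)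
        = ∑ i, ∑ j, (g i * (v l i * (starRingEnd ℂ) (v p i))) *
            (starRingEnd ℂ) (g j * (v l j * (starRingEnd ℂ) (v p j))) := by
      intro l p
      simp only [hc]
      rw [map_sum, Finset.sum_mul_sum]
    calc (∑ i, ∑ j, g i * (starRingEnd ℂ) (g j) * (P i j * (starRingEnd ℂ) (P i j)))
        = ∑ i, ∑ j, ∑ l, ∑ p, (g i * (v l i * (starRingEnd ℂ) (v p i))) *
            (starRingEnd ℂ) (g j * (v l j * (starRingEnd ℂ) (v p j))) :=
          Finset.sum_congr rfl fun i _ => Finset.sum_congr rfl fun j _ => expand1 i j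
      _ = ∑ i, ∑ l, ∑ j, ∑ p, (g i * (v l i * (starRingEnd ℂ) (v p i))) *
            (starRingEnd ℂ) (g j * (v l j * (starRingEnd ℂ) (v p j))) :=
          Finset.sum_congr rfl fun i _ => Finset.sum_comm
      _ = ∑ i, ∑ l, ∑ p, ∑ j, (g i * (v l i * (starRingEnd ℂ) (v p i))) *
            (starRingEnd ℂ) (g j * (v l j * (starRingEnd ℂ) (v p j))) :=
          Finset.sum_congr rfl fun i _ => Finset.sum_congr rfl fun l _ => Finset.sum_comm
      _ = ∑ l, ∑ i, ∑ p, ∑ j, (g i * (v l i * (starRingEnd ℂ) (v p i))) *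
            (starRingEnd ℂ) (g j * (v l j * (starRingEnd ℂ) (v p j))) := Finset.sum_comm
      _ = ∑ l, ∑ p, ∑ i, ∑ j, (g i * (v l i * (starRingEnd ℂ) (v p i))) *
            (starRingEnd ℂ) (g j * (v l j * (starRingEnd ℂ) (v p j))) :=
          Finset.sum_congr rfl fun l _ => Finset.sum_comm
      _ = ∑ l, ∑ p, c l p * (starRingEnd ℂ) (c l p) :=
          Finset.sum_congr rfl fun l _ => Finset.sum_congr rfl fun p _ => (factor l p).symm
  rw [hdiag, hquad]
  have hlhs : (∑ l ∈ T, c l l) * (starRingEnd ℂ) (∑ l ∈ T, c l l)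
      = ((Complex.normSq (∑ l ∈ T, c l l) : ℝ) : ℂ) := Complex.mul_conj _
  have hrhs : (∑ l, ∑ p, c l p * (starRingEnd ℂ) (c l p))
      = ((∑ l, ∑ p, Complex.normSq (c l p) : ℝ) : ℂ) := by
    push_cast
    exact Finset.sum_congr rfl fun l _ => Finset.sum_congr rfl fun p _ => Complex.mul_conj _
  rw [hlhs, hrhs]
  have hcast : ((P.rank : ℂ))⁻¹ * ((Complex.normSq (∑ l ∈ T, c l l) : ℝ) : ℂ)
      = (((P.rank : ℝ)⁻¹ * Complex.normSq (∑ l ∈ T, c l l) : ℝ) : ℂ) := by push_cast; ring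
  rw [hcast, Complex.real_le_real]
  -- now a real inequality
  have hTpos : 0 < (T.card : ℝ) := by
    have : 0 < T.card := hT ▸ hr
    exact_mod_cast this
  rw [← hT]
  rw [inv_mul_le_iff₀ hTpos]
  calc Complex.normSq (∑ l ∈ T, c l l)
      ≤ (∑ l ∈ T, ‖c l l‖) ^ 2 := by
        rw [← Complex.sq_norm]
        have h1 : ‖∑ l ∈ T, c l l‖ ≤ ∑ l ∈ T, ‖c l l‖ :=
          norm_sum_le _ _
        exact pow_le_pow_left₀ (norm_nonneg _) h1 2
    _ ≤ T.card * ∑ l ∈ T, (‖c l l‖) ^ 2 :=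
        sq_sum_le_card_mul_sum_sq (s := T) (f := fun l => ‖c l l‖)
    _ = T.card * ∑ l ∈ T, Complex.normSq (c l l) := by
        congr 1
        exact Finset.sum_congr rfl fun l _ => Complex.sq_norm _
    _ ≤ T.card * ∑ l, ∑ p, Complex.normSq (c l p) := by
        refine mul_le_mul_of_nonneg_left ?_ hTpos.le
        calc ∑ l ∈ T, Complex.normSq (c l l)
            ≤ ∑ l, Complex.normSq (c l l) :=
              Finset.sum_le_sum_of_subset_of_nonneg (Finset.subset_univ T)
                (fun l _ _ => Complex.normSq_nonneg _)
          _ ≤ ∑ l, ∑ p, Complex.normSq (c l p) :=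
              Finset.sum_le_sum fun l _ =>
                Finset.single_le_sum (fun p _ => Complex.normSq_nonneg _) (Finset.mem_univ l)

theorem scaled_schur_product_lower_bound
    (n k : ℕ) (hn : 1 ≤ n) (hk : 1 ≤ k)
    (u y : Fin k → Fin n → ℂ)
    (w : Fin n → ℂ) (hw : w = fun i => ∏ t, (u t i * y t i)) (hw0 : w ≠ 0)
    (M : Fin k → Matrix (Fin n) (Fin n) ℂ) (hM : ∀ t, (M t).PosSemidef)
    (J : Finset (Fin n)) (hJ : ∀ j, j ∈ J ↔ w j ≠ 0)
    (S : Matrix J J ℂ)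
    (hS : S = (Matrix.of fun i j : Fin n => ∏ t, M t i j).submatrix
      Subtype.val Subtype.val)
    (hS0 : S ≠ 0)
    (z : Fin n → ℂ) (hz : z = fun i => w i * ∏ t, M t i i) :
    ((Matrix.of fun i j : Fin n => ∏ t,
        ((Matrix.diagonal (u t) * M t * (Matrix.diagonal (u t))ᴴ) i j *
         (Matrix.diagonal (y t) * (M t).map (starRingEnd ℂ) *
            (Matrix.diagonal (y t))ᴴ) i j)) -
      ((S.rank : ℂ))⁻¹ • vecMulVec z (star z)).PosSemidef := by
  set N : Matrix (Fin n) (Fin n) ℂ := Matrix.of fun i j : Fin n => ∏ t, M t i j with hNdef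
  have hNpsd : N.PosSemidef := psd_prod Finset.univ M hM
  have hNH := hNpsd.1
  have hSpsd : S.PosSemidef := by rw [hS]; exact hNpsd.submatrix _
  have hrank : 1 ≤ S.rank := psd_rank_pos hSpsd hS0
  -- entry formula for the big Schur product matrix
  have hA : ∀ i j : Fin n, (∏ t,
        ((Matrix.diagonal (u t) * M t * (Matrix.diagonal (u t))ᴴ) i j *
         (Matrix.diagonal (y t) * (M t).map (starRingEnd ℂ) *
            (Matrix.diagonal (y t))ᴴ) i j))
      = w i * (starRingEnd ℂ) (w j) * (N i j * (starRingEnd ℂ) (N i j)) := by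
    intro i j
    have h1 : ∀ t, (Matrix.diagonal (u t) * M t * (Matrix.diagonal (u t))ᴴ) i j
        = u t i * M t i j * (starRingEnd ℂ) (u t j) := by
      intro t
      rw [Matrix.diagonal_conjTranspose, Matrix.mul_diagonal, Matrix.diagonal_mul]
      rfl
    have h2 : ∀ t, (Matrix.diagonal (y t) * (M t).map (starRingEnd ℂ) *
        (Matrix.diagonal (y t))ᴴ) i j
        = y t i * (starRingEnd ℂ) (M t i j) * (starRingEnd ℂ) (y t j) := by
      intro t
      rw [Matrix.diagonal_conjTranspose, Matrix.mul_diagonal, Matrix.diagonal_mul]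
      rfl
    calc (∏ t, ((Matrix.diagonal (u t) * M t * (Matrix.diagonal (u t))ᴴ) i j *
         (Matrix.diagonal (y t) * (M t).map (starRingEnd ℂ) *
            (Matrix.diagonal (y t))ᴴ) i j))
        = ∏ t, ((u t i * y t i) * (starRingEnd ℂ) (u t j * y t j) *
            (M t i j * (starRingEnd ℂ) (M t i j))) := by
          refine Finset.prod_congr rfl fun t _ => ?_
          rw [h1 t, h2 t, _root_.map_mul]
          ring
      _ = (∏ t, (u t i * y t i)) * (starRingEnd ℂ) (∏ t, (u t j * y t j)) *
            ((∏ t, M t i j) * (starRingEnd ℂ) (∏ t, M t i j)) := by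
          rw [Finset.prod_mul_distrib, Finset.prod_mul_distrib, map_prod, map_prod]
          congr 1
          exact Finset.prod_mul_distrib
      _ = w i * (starRingEnd ℂ) (w j) * (N i j * (starRingEnd ℂ) (N i j)) := by
          rw [hw]
          rfl
  have hNconj : ∀ i j, N j i = (starRingEnd ℂ) (N i j) := fun i j => (hNH.apply j i).symm
  rw [posSemidef_iff_dotProduct_mulVec]
  constructor
  · -- Hermitian
    ext i j
    simp only [conjTranspose_apply, Matrix.sub_apply, Matrix.smul_apply, Matrix.of_apply,
      vecMulVec_apply, Pi.star_apply, star_sub, star_mul', smul_eq_mul, star_star,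
      RCLike.star_def, _root_.map_mul, map_inv₀, map_natCast]
    rw [hA i j, hA j i, hNconj i j]
    simp only [_root_.map_mul, Complex.conj_conj]
    ring
  · intro x
    set g : Fin n → ℂ := fun i => (starRingEnd ℂ) (x i) * w i with hgdef
    have hg0 : ∀ i, i ∉ J → g i = 0 := by
      intro i hi
      have hwi : w i = 0 := by
        by_contra h
        exact hi ((hJ i).mpr h)
      simp [hgdef, hwi]
    have hgconj : ∀ j, (starRingEnd ℂ) (g j) = x j * (starRingEnd ℂ) (w j) := by
      intro j
      simp [hgdef, _root_.map_mul]
    -- quadratic form identity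
    have key : star x ⬝ᵥ (((Matrix.of fun i j : Fin n => ∏ t,
        ((Matrix.diagonal (u t) * M t * (Matrix.diagonal (u t))ᴴ) i j *
         (Matrix.diagonal (y t) * (M t).map (starRingEnd ℂ) *
            (Matrix.diagonal (y t))ᴴ) i j)) -
        ((S.rank : ℂ))⁻¹ • vecMulVec z (star z)) *ᵥ x)
        = (∑ i, ∑ j, g i * (starRingEnd ℂ) (g j) * (N i j * (starRingEnd ℂ) (N i j)))
          - ((S.rank : ℂ))⁻¹ * ((∑ i, g i * N i i) * (starRingEnd ℂ) (∑ i, g i * N i i)) := by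
      rw [sub_mulVec, dotProduct_sub, smul_mulVec, dotProduct_smul, smul_eq_mul]
      congr 1
      · simp only [dotProduct, mulVec, Pi.star_apply, RCLike.star_def, Matrix.of_apply]
        refine Finset.sum_congr rfl fun i _ => ?_
        rw [Finset.mul_sum]
        refine Finset.sum_congr rfl fun j _ => ?_
        rw [hA i j, hgconj j]
        simp only [hgdef]
        ring
      · congr 1
        have hzN : ∀ i, z i = w i * N i i := by intro i; rw [hz]; rfl
        calc star x ⬝ᵥ (vecMulVec z (star z) *ᵥ x)
            = ∑ i, ∑ j, ((starRingEnd ℂ) (x i) * z i) * ((starRingEnd ℂ) (z j) * x j) := by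
              simp only [dotProduct, mulVec, vecMulVec_apply, Pi.star_apply, RCLike.star_def]
              refine Finset.sum_congr rfl fun i _ => ?_
              rw [Finset.mul_sum]
              exact Finset.sum_congr rfl fun j _ => by ring
          _ = (∑ i, (starRingEnd ℂ) (x i) * z i) * (∑ j, (starRingEnd ℂ) (z j) * x j) :=
              (Finset.sum_mul_sum _ _ _ _).symm
          _ = (∑ i, g i * N i i) * (starRingEnd ℂ) (∑ i, g i * N i i) := by
              congr 1
              · refine Finset.sum_congr rfl fun i _ => ?_
                simp only [hzN i, hgdef]
                ring
              · rw [map_sum]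
                refine Finset.sum_congr rfl fun j _ => ?_
                simp only [hzN j, hgdef, _root_.map_mul, Complex.conj_conj]
                ring
    rw [key]
    -- restrict sums to J
    have houter : (∑ i, ∑ j, g i * (starRingEnd ℂ) (g j) * (N i j * (starRingEnd ℂ) (N i j)))
        = ∑ i : J, ∑ j : J, g i.1 * (starRingEnd ℂ) (g j.1) *
            (N i.1 j.1 * (starRingEnd ℂ) (N i.1 j.1)) := by
      have hin : ∀ i : Fin n, (∑ j, g i * (starRingEnd ℂ) (g j) * (N i j * (starRingEnd ℂ) (N i j)))
          = ∑ j ∈ J, g i * (starRingEnd ℂ) (g j) * (N i j * (starRingEnd ℂ) (N i j)) := by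
        intro i
        symm
        apply Finset.sum_subset (Finset.subset_univ J)
        intro j _ hj
        simp [hg0 j hj]
      rw [Finset.sum_congr rfl fun i _ => hin i]
      rw [show (∑ i, ∑ j ∈ J, g i * (starRingEnd ℂ) (g j) * (N i j * (starRingEnd ℂ) (N i j)))
          = ∑ i ∈ J, ∑ j ∈ J, g i * (starRingEnd ℂ) (g j) * (N i j * (starRingEnd ℂ) (N i j)) by
        symm
        apply Finset.sum_subset (Finset.subset_univ J)
        intro i _ hi
        exact Finset.sum_eq_zero fun j _ => by simp [hg0 i hi]]
      rw [← Finset.sum_coe_sort J]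
      refine Finset.sum_congr rfl fun i _ => ?_
      rw [← Finset.sum_coe_sort J]
    have hsum : (∑ i, g i * N i i) = ∑ i : J, g i.1 * N i.1 i.1 := by
      rw [show (∑ i, g i * N i i) = ∑ i ∈ J, g i * N i i by
        symm
        apply Finset.sum_subset (Finset.subset_univ J)
        intro i _ hi
        simp [hg0 i hi]]
      rw [← Finset.sum_coe_sort J]
    have hSij : ∀ i j : J, S i j = N i.1 j.1 := by
      intro i j
      rw [hS]
      rfl
    rw [houter, hsum]
    rw [sub_nonneg]
    have hcore := core_ineq hSpsd hrank (fun a : J => g a.1)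
    simp only [hSij] at hcore
    exact hcore
end

section
/- Let n ≥ 1 and let M, N be n × n complex positive semidefinite matrices. Let J = {j : m_{jj} > 0 and n_{jj} > 0}, let D_M and D_N be the diagonal matrices whose diagonals agree with those of M and N respectively (and off-diagonal entries zero), and let C_J(M) be the J × J matrix with (j,k) entry m_{jk} / √(m_{jj} m_{kk}) for j, k ∈ J, and similarly C_J(N). Then M ∘ N ≤ (max_{j ∈ J} ‖C_J(M)_{*j}‖ · ‖C_J(N)_{*j}‖) · D_M D_N in the Loewner order, where C_{*j} denotes the j-th column of C and ‖·‖ the Euclidean norm (with the maximum over the empty set interpreted as 0). -/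
open Matrix ComplexOrder Finset

-- aux: column representation facts
lemma entry_facts (n : ℕ) (M : Matrix (Fin n) (Fin n) ℂ) (hM : M.PosSemidef) (j k : Fin n) :
    0 ≤ (M j j).re ∧
      ‖M j k‖ ≤ Real.sqrt ((M j j).re) * Real.sqrt ((M k k).re) := by
  obtain ⟨B, rfl⟩ : ∃ B : Matrix (Fin n) (Fin n) ℂ, M = Bᴴ * B := by
    classical
    open scoped MatrixOrder in
    obtain ⟨B, hB⟩ := CStarAlgebra.nonneg_iff_eq_star_mul_self.mp hM.nonneg
    exact ⟨B, hB⟩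
  have hd : ∀ j : Fin n, ((Bᴴ * B) j j).re = ∑ i, ‖B i j‖ ^ 2 := by
    intro j
    rw [Matrix.mul_apply, Complex.re_sum]
    refine Finset.sum_congr rfl fun i _ => ?_
    rw [Matrix.conjTranspose_apply, Complex.star_def, ← Complex.normSq_eq_conj_mul_self,
      Complex.ofReal_re, Complex.sq_norm]
  constructor
  · rw [hd]; positivity
  · calc ‖(Bᴴ * B) j k‖
        ≤ ∑ i, ‖B i j‖ * ‖B i k‖ := by
          rw [Matrix.mul_apply]
          refine (norm_sum_le _ _).trans_eq ?_
          refine Finset.sum_congr rfl fun i _ => ?_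
          rw [norm_mul, Matrix.conjTranspose_apply, Complex.star_def, Complex.norm_conj]
      _ ≤ Real.sqrt (∑ i, ‖B i j‖ ^ 2) * Real.sqrt (∑ i, ‖B i k‖ ^ 2) := by
          rw [← Real.sqrt_mul (by positivity)]
          refine (Real.le_sqrt (by positivity) (by positivity)).mpr ?_
          exact Finset.sum_mul_sq_le_sq_mul_sq _ _ _
      _ = _ := by rw [hd, hd]

theorem schur_product_upper_bound
    (n : ℕ) (hn : 1 ≤ n) (M N : Matrix (Fin n) (Fin n) ℂ)
    (hM : M.PosSemidef) (hN : N.PosSemidef)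
    (J : Finset (Fin n)) (hJ : ∀ j, j ∈ J ↔ (0 < (M j j).re ∧ 0 < (N j j).re))
    (CM CN : Fin n → Fin n → ℂ)
    (hCM : CM = fun k j => M k j / (Real.sqrt ((M k k).re * (M j j).re) : ℝ))
    (hCN : CN = fun k j => N k j / (Real.sqrt ((N k k).re * (N j j).re) : ℝ))
    (c : ℝ)
    (hc : c = ⨆ j ∈ J,
      Real.sqrt (∑ k ∈ J, ‖CM k j‖ ^ 2) *
        Real.sqrt (∑ k ∈ J, ‖CN k j‖ ^ 2)) :
    ((c : ℂ) • (Matrix.diagonal M.diag * Matrix.diagonal N.diag) -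
      M.hadamard N).PosSemidef := by
  have hm0 : ∀ j, 0 ≤ (M j j).re := fun j => (entry_facts n M hM j j).1
  have hn0 : ∀ j, 0 ≤ (N j j).re := fun j => (entry_facts n N hN j j).1
  have habsM : ∀ j k, ‖M j k‖ ≤ Real.sqrt ((M j j).re) * Real.sqrt ((M k k).re) :=
    fun j k => (entry_facts n M hM j k).2
  have habsN : ∀ j k, ‖N j k‖ ≤ Real.sqrt ((N j j).re) * Real.sqrt ((N k k).re) :=
    fun j k => (entry_facts n N hN j k).2
  have hMdiag : ∀ j, M j j = ((M j j).re : ℂ) := fun j => (hM.1.coe_re_apply_self j).symm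
  have hNdiag : ∀ j, N j j = ((N j j).re : ℂ) := fun j => (hN.1.coe_re_apply_self j).symm
  have habssymM : ∀ j k, ‖M j k‖ = ‖M k j‖ := fun j k => by
    rw [← hM.1.apply j k, Complex.star_def, Complex.norm_conj]
  have habssymN : ∀ j k, ‖N j k‖ = ‖N k j‖ := fun j k => by
    rw [← hN.1.apply j k, Complex.star_def, Complex.norm_conj]
  have hCMabs : ∀ j k, ‖CM j k‖
      = ‖M j k‖ / Real.sqrt ((M j j).re * (M k k).re) := by
    intro j k
    rw [hCM]
    rw [norm_div, Complex.norm_real, Real.norm_of_nonneg (Real.sqrt_nonneg _)]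
  have hCNabs : ∀ j k, ‖CN j k‖
      = ‖N j k‖ / Real.sqrt ((N j j).re * (N k k).re) := by
    intro j k
    rw [hCN]
    rw [norm_div, Complex.norm_real, Real.norm_of_nonneg (Real.sqrt_nonneg _)]
  have hc0 : 0 ≤ c := by
    rw [hc]; exact Real.iSup_nonneg fun j => Real.iSup_nonneg fun _ => by positivity
  have hzM : ∀ j k, (M j j).re = 0 ∨ (M k k).re = 0 → ‖M j k‖ = 0 := by
    intro j k h
    refine le_antisymm ?_ (by positivity)
    rcases h with h | h <;> simpa [h] using habsM j k
  have hzN : ∀ j k, (N j j).re = 0 ∨ (N k k).re = 0 → ‖N j k‖ = 0 := by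
    intro j k h
    refine le_antisymm ?_ (by positivity)
    rcases h with h | h <;> simpa [h] using habsN j k
  have hkey : ∀ i, i ∉ J → (M i i).re = 0 ∨ (N i i).re = 0 := by
    intro i hi
    rw [hJ] at hi; push_neg at hi
    rcases (hm0 i).eq_or_lt with h1 | h1
    · exact Or.inl h1.symm
    · exact Or.inr (le_antisymm (hi h1) (hn0 i))
  have hFzero : ∀ j k, j ∉ J ∨ k ∉ J →
      ‖M j k‖ * ‖N j k‖ = 0 := by
    intro j k h
    rcases h with h | h <;> rcases hkey _ h with h2 | h2
    · rw [hzM j k (Or.inl h2), zero_mul]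
    · rw [hzN j k (Or.inl h2), mul_zero]
    · rw [hzM j k (Or.inr h2), zero_mul]
    · rw [hzN j k (Or.inr h2), mul_zero]
  have hH : (M.hadamard N)ᴴ = M.hadamard N := by
    ext i j
    simp only [Matrix.conjTranspose_apply, Matrix.hadamard_apply, star_mul']
    rw [hM.1.apply, hN.1.apply, mul_comm]
  have hD : (Matrix.diagonal M.diag * Matrix.diagonal N.diag)
      = Matrix.diagonal (fun j => (((M j j).re : ℂ) * ((N j j).re : ℂ))) := by
    rw [Matrix.diagonal_mul_diagonal]
    refine congrArg Matrix.diagonal (funext fun j => ?_)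
    show M j j * N j j = _
    conv_lhs => rw [hMdiag j, hNdiag j]
  rw [hD]
  apply Matrix.PosSemidef.of_dotProduct_mulVec_nonneg
  · show _ᴴ = _
    have hstar : (star fun j => (((M j j).re : ℂ) * ((N j j).re : ℂ)))
        = fun j => (((M j j).re : ℂ) * ((N j j).re : ℂ)) := by
      funext j
      simp [Pi.star_apply, ← Complex.ofReal_mul, Complex.star_def, Complex.conj_ofReal]
    rw [Matrix.conjTranspose_sub, Matrix.conjTranspose_smul, hH,
      Matrix.diagonal_conjTranspose, hstar, Complex.star_def, Complex.conj_ofReal]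
  · intro x
    rw [Matrix.sub_mulVec, dotProduct_sub]
    have hterm : ∀ j : Fin n, ((‖x j‖ ^ 2 : ℝ) : ℂ)
        = (starRingEnd ℂ) (x j) * x j := fun j => by
      rw [Complex.sq_norm, Complex.normSq_eq_conj_mul_self]
    have hz1 : star x ⬝ᵥ ((c : ℂ) •
          Matrix.diagonal (fun j => (((M j j).re : ℂ) * ((N j j).re : ℂ)))) *ᵥ x
        = ((c * ∑ j, ((M j j).re * (N j j).re) * ‖x j‖ ^ 2 : ℝ) : ℂ) := by
      rw [Matrix.smul_mulVec, dotProduct_smul, Complex.ofReal_mul, smul_eq_mul]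
      congr 1
      rw [Complex.ofReal_sum]
      simp only [dotProduct, Matrix.mulVec_diagonal, Pi.star_apply]
      refine Finset.sum_congr rfl fun j _ => ?_
      rw [Complex.ofReal_mul, Complex.ofReal_mul, hterm j, Complex.star_def]
      ring
    have him : (star x ⬝ᵥ (M.hadamard N) *ᵥ x).im = 0 := by
      have hst : star (star x ⬝ᵥ (M.hadamard N) *ᵥ x) = star x ⬝ᵥ (M.hadamard N) *ᵥ x := by
        conv_lhs => rw [Matrix.star_dotProduct, star_star]
        rw [Matrix.star_mulVec, ← Matrix.dotProduct_mulVec, hH]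
      exact Complex.conj_eq_iff_im.mp hst
    set t : Fin n → ℝ := fun j => ‖x j‖ * Real.sqrt ((M j j).re * (N j j).re)
      with ht
    set a : Fin n → Fin n → ℝ := fun j k => ‖CM j k‖ * ‖CN j k‖
      with ha
    set F : Fin n → Fin n → ℝ := fun j k =>
      (‖x j‖ * ‖x k‖) * (‖M j k‖ * ‖N j k‖)
      with hF
    have hsymA : ∀ j k, a j k = a k j := by
      intro j k
      simp only [ha]
      rw [hCMabs, hCMabs, hCNabs, hCNabs, habssymM j k, habssymN j k,
        mul_comm ((M j j).re) ((M k k).re), mul_comm ((N j j).re) ((N k k).re)]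
    have e1 : (star x ⬝ᵥ (M.hadamard N) *ᵥ x).re
        = ∑ j, ∑ k, ((star x) j * ((M.hadamard N) j k * x k)).re := by
      simp only [dotProduct, Matrix.mulVec, Finset.mul_sum]
      rw [Complex.re_sum]
      exact Finset.sum_congr rfl fun j _ => by rw [Complex.re_sum]
    have e3 : ∑ j, ∑ k, ((star x) j * ((M.hadamard N) j k * x k)).re
        ≤ ∑ j : Fin n, ∑ k : Fin n, F j k := by
      refine Finset.sum_le_sum fun j _ => Finset.sum_le_sum fun k _ => ?_
      have habs : ‖(star x) j * ((M.hadamard N) j k * x k)‖ = F j k := by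
        simp only [Pi.star_apply, Matrix.hadamard_apply, hF, norm_mul,
          Complex.star_def, Complex.norm_conj]
        ring
      exact habs ▸ Complex.re_le_norm _
    have e4 : ∑ j : Fin n, ∑ k : Fin n, F j k = ∑ j ∈ J, ∑ k ∈ J, F j k := by
      rw [← Finset.sum_subset (Finset.subset_univ J) (fun j _ hj => ?_)]
      · refine Finset.sum_congr rfl fun j _ => ?_
        refine (Finset.sum_subset (Finset.subset_univ J) fun k _ hk => ?_).symm
        simp only [hF]
        rw [hFzero j k (Or.inr hk), mul_zero]
      · refine Finset.sum_eq_zero fun k _ => ?_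
        simp only [hF]
        rw [hFzero j k (Or.inl hj), mul_zero]
    have e5 : ∀ j ∈ J, ∀ k ∈ J, F j k = (t j * t k) * a j k := by
      intro j hj k hk
      obtain ⟨hmj, hwj⟩ := (hJ j).1 hj
      obtain ⟨hmk, hwk⟩ := (hJ k).1 hk
      have hsM : 0 < Real.sqrt ((M j j).re * (M k k).re) := Real.sqrt_pos.mpr (by positivity)
      have hsN : 0 < Real.sqrt ((N j j).re * (N k k).re) := Real.sqrt_pos.mpr (by positivity)
      have hsq : Real.sqrt ((M j j).re * (N j j).re) * Real.sqrt ((M k k).re * (N k k).re)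
          = Real.sqrt ((M j j).re * (M k k).re) * Real.sqrt ((N j j).re * (N k k).re) := by
        rw [← Real.sqrt_mul (by positivity), ← Real.sqrt_mul (by positivity)]
        ring_nf
      have h1 : t j * t k = (‖x j‖ * ‖x k‖) *
          (Real.sqrt ((M j j).re * (M k k).re) * Real.sqrt ((N j j).re * (N k k).re)) := by
        simp only [ht]
        rw [mul_mul_mul_comm, hsq]
      simp only [hF, ha]
      rw [h1, hCMabs, hCNabs]
      field_simp
    have e6 : ∑ j ∈ J, ∑ k ∈ J, (t j * t k) * a j k
        ≤ ∑ j ∈ J, t j ^ 2 * (∑ k ∈ J, a j k) := by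
      have h2 : ∑ j ∈ J, ∑ k ∈ J, t k ^ 2 * a j k = ∑ j ∈ J, ∑ k ∈ J, t j ^ 2 * a j k := by
        rw [Finset.sum_comm]
        exact Finset.sum_congr rfl fun j _ => Finset.sum_congr rfl fun k _ => by
          rw [hsymA]
      calc ∑ j ∈ J, ∑ k ∈ J, (t j * t k) * a j k
          ≤ ∑ j ∈ J, ∑ k ∈ J, ((t j ^ 2 + t k ^ 2) / 2) * a j k := by
            refine Finset.sum_le_sum fun j _ => Finset.sum_le_sum fun k _ => ?_
            have ha0 : 0 ≤ a j k := by simp only [ha]; positivity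
            refine mul_le_mul_of_nonneg_right ?_ ha0
            nlinarith [sq_nonneg (t j - t k)]
        _ = ∑ j ∈ J, ∑ k ∈ J, t j ^ 2 * a j k := by
            have hsplit : ∀ j k, ((t j ^ 2 + t k ^ 2) / 2) * a j k
                = (t j ^ 2 * a j k) / 2 + (t k ^ 2 * a j k) / 2 := fun j k => by ring
            simp_rw [hsplit, Finset.sum_add_distrib, ← Finset.sum_div]
            rw [h2]
            ring
        _ = ∑ j ∈ J, t j ^ 2 * (∑ k ∈ J, a j k) :=
            Finset.sum_congr rfl fun j _ => (Finset.mul_sum _ _ _).symm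
    have e7 : ∀ j ∈ J, ∑ k ∈ J, a j k ≤ c := by
      intro j hj
      have h1 : ∑ k ∈ J, a j k = ∑ k ∈ J, ‖CM k j‖ * ‖CN k j‖ :=
        Finset.sum_congr rfl fun k _ => by rw [hsymA]
      have h2 : ∑ k ∈ J, ‖CM k j‖ * ‖CN k j‖ ≤
          Real.sqrt (∑ k ∈ J, ‖CM k j‖ ^ 2) *
            Real.sqrt (∑ k ∈ J, ‖CN k j‖ ^ 2) := by
        rw [← Real.sqrt_mul (by positivity)]
        exact (Real.le_sqrt (by positivity) (by positivity)).mpr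
          (Finset.sum_mul_sq_le_sq_mul_sq _ _ _)
      have h3 : Real.sqrt (∑ k ∈ J, ‖CM k j‖ ^ 2) *
            Real.sqrt (∑ k ∈ J, ‖CN k j‖ ^ 2) ≤ c := by
        rw [hc]
        have hb : BddAbove (Set.range fun j => ⨆ _ : j ∈ J,
            Real.sqrt (∑ k ∈ J, ‖CM k j‖ ^ 2) *
              Real.sqrt (∑ k ∈ J, ‖CN k j‖ ^ 2)) :=
          Set.Finite.bddAbove (Set.finite_range _)
        have hle := le_ciSup hb j
        rwa [ciSup_pos hj] at hle
      rw [h1]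
      exact h2.trans h3
    have e8 : ∑ j ∈ J, t j ^ 2 * (∑ k ∈ J, a j k) ≤ c * ∑ j ∈ J, t j ^ 2 := by
      rw [Finset.mul_sum]
      refine Finset.sum_le_sum fun j hj => ?_
      rw [mul_comm c]
      exact mul_le_mul_of_nonneg_left (e7 j hj) (sq_nonneg (t j))
    have e9 : ∑ j ∈ J, t j ^ 2
        ≤ ∑ j : Fin n, ((M j j).re * (N j j).re) * ‖x j‖ ^ 2 := by
      have hteq : ∀ j, t j ^ 2 = ((M j j).re * (N j j).re) * ‖x j‖ ^ 2 := by
        intro j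
        simp only [ht]
        rw [mul_pow, Real.sq_sqrt (mul_nonneg (hm0 j) (hn0 j))]
        ring
      calc ∑ j ∈ J, t j ^ 2
          = ∑ j ∈ J, ((M j j).re * (N j j).re) * ‖x j‖ ^ 2 :=
            Finset.sum_congr rfl fun j _ => hteq j
        _ ≤ _ := Finset.sum_le_sum_of_subset_of_nonneg (Finset.subset_univ J)
            fun j _ _ => mul_nonneg (mul_nonneg (hm0 j) (hn0 j)) (sq_nonneg _)
    have hfinal : (star x ⬝ᵥ (M.hadamard N) *ᵥ x).re
        ≤ c * ∑ j, ((M j j).re * (N j j).re) * ‖x j‖ ^ 2 := by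
      rw [e1]
      calc ∑ j, ∑ k, ((star x) j * ((M.hadamard N) j k * x k)).re
          ≤ ∑ j : Fin n, ∑ k : Fin n, F j k := e3
        _ = ∑ j ∈ J, ∑ k ∈ J, F j k := e4
        _ = ∑ j ∈ J, ∑ k ∈ J, (t j * t k) * a j k :=
            Finset.sum_congr rfl fun j hj => Finset.sum_congr rfl fun k hk => e5 j hj k hk
        _ ≤ ∑ j ∈ J, t j ^ 2 * (∑ k ∈ J, a j k) := e6
        _ ≤ c * ∑ j ∈ J, t j ^ 2 := e8
        _ ≤ _ := mul_le_mul_of_nonneg_left e9 hc0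
    rw [Complex.le_def]
    constructor
    · rw [Complex.sub_re, hz1, Complex.ofReal_re, Complex.zero_re]
      linarith
    · rw [Complex.sub_im, hz1, Complex.ofReal_im, him, Complex.zero_im]
      norm_num
end

section
/- Let a, b > 0 be real numbers and let c be a real number with √(ab/2) ≤ c < √(ab). Set d = 2c²/b − a and let A be the 3 × 3 real matrix with rows (a, c, d), (c, b, c), (d, c, a). Then A is doubly nonnegative (positive semidefinite with all entries nonnegative), but A − (1/3) v vᵀ is NOT positive semidefinite, where v = (√a, √b, √a)ᵀ; indeed det(A − (1/3) v vᵀ) = −(2/3)(a − d)(√(ab) − c)² < 0. -/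
open Matrix

set_option maxHeartbeats 1000000

theorem doubly_nonnegative_counterexample
    (a b c : ℝ) (ha : 0 < a) (hb : 0 < b)
    (hc1 : Real.sqrt (a * b / 2) ≤ c) (hc2 : c < Real.sqrt (a * b))
    (d : ℝ) (hd : d = 2 * c ^ 2 / b - a)
    (A : Matrix (Fin 3) (Fin 3) ℝ) (hA : A = !![a, c, d; c, b, c; d, c, a])
    (v : Fin 3 → ℝ) (hv : v = ![Real.sqrt a, Real.sqrt b, Real.sqrt a]) :
    A.PosSemidef ∧ (∀ i j, 0 ≤ A i j) ∧
      ¬ (A - (3 : ℝ)⁻¹ • vecMulVec v v).PosSemidef ∧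
      (A - (3 : ℝ)⁻¹ • vecMulVec v v).det =
        -(2 / 3) * (a - d) * (Real.sqrt (a * b) - c) ^ 2 ∧
      (A - (3 : ℝ)⁻¹ • vecMulVec v v).det < 0 := by
  have hc0 : 0 ≤ c := le_trans (Real.sqrt_nonneg _) hc1
  have hab : (0:ℝ) ≤ a * b := by positivity
  have hsq : Real.sqrt (a * b) ^ 2 = a * b := Real.sq_sqrt hab
  have hsq2 : Real.sqrt (a * b / 2) ^ 2 = a * b / 2 := Real.sq_sqrt (by positivity)
  have hc2' : c ^ 2 < a * b := by
    nlinarith [Real.sqrt_nonneg (a * b)]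
  have hc1' : a * b / 2 ≤ c ^ 2 := by
    nlinarith [Real.sqrt_nonneg (a * b / 2)]
  have hdb : d * b = 2 * c ^ 2 - a * b := by
    rw [hd]; field_simp
  have hd0 : 0 ≤ d := by
    have : 0 ≤ d * b := by nlinarith
    have h2 := div_nonneg this hb.le
    rwa [mul_div_assoc, div_self hb.ne', mul_one] at h2
  have hda : d < a := by nlinarith
  have hs : Real.sqrt a ^ 2 = a := Real.sq_sqrt ha.le
  have ht : Real.sqrt b ^ 2 = b := Real.sq_sqrt hb.le
  have hst : Real.sqrt (a * b) = Real.sqrt a * Real.sqrt b := Real.sqrt_mul ha.le b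
  -- determinant equation
  have hdet : (A - (3 : ℝ)⁻¹ • vecMulVec v v).det =
      -(2 / 3) * (a - d) * (Real.sqrt (a * b) - c) ^ 2 := by
    subst hA hv
    rw [Matrix.det_fin_three]
    simp [vecMulVec_apply, Matrix.sub_apply, Matrix.smul_apply, hst]
    set s := Real.sqrt a
    set t := Real.sqrt b
    have ht0 : t ≠ 0 := ne_of_gt (Real.sqrt_pos.mpr hb)
    rw [hd, ← hs, ← ht]
    field_simp
    ring
  have hdetlt : (A - (3 : ℝ)⁻¹ • vecMulVec v v).det < 0 := by
    rw [hdet]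
    have h1 : 0 < Real.sqrt (a * b) - c := sub_pos.mpr hc2
    have h2 : 0 < a - d := sub_pos.mpr hda
    nlinarith [mul_pos h2 (pow_pos h1 2)]
  refine ⟨?_, ?_, ?_, hdet, hdetlt⟩
  · rw [Matrix.posSemidef_iff_dotProduct_mulVec]
    constructor
    · rw [hA]
      ext i j
      fin_cases i <;> fin_cases j <;> simp [Matrix.conjTranspose_apply]
    · intro x
      have key : b * (star x ⬝ᵥ A *ᵥ x) =
          (c * x 0 + b * x 1 + c * x 2) ^ 2 + (a * b - c ^ 2) * (x 0 - x 2) ^ 2 := by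
        subst hA
        simp [dotProduct, Matrix.mulVec, Fin.sum_univ_three]
        linear_combination (2 * x 0 * x 2) * hdb
      have h1 : 0 ≤ (c * x 0 + b * x 1 + c * x 2) ^ 2 + (a * b - c ^ 2) * (x 0 - x 2) ^ 2 := by
        have h3 := sq_nonneg (x 0 - x 2)
        nlinarith [sq_nonneg (c * x 0 + b * x 1 + c * x 2)]
      have h4 : 0 ≤ b * (star x ⬝ᵥ A *ᵥ x) := key ▸ h1
      exact (mul_nonneg_iff_of_pos_left hb).mp h4
  · intro i j
    fin_cases i <;> fin_cases j <;> simp [hA, ha.le, hb.le, hc0, hd0]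
  · intro h
    have hdn : 0 ≤ (A - (3 : ℝ)⁻¹ • vecMulVec v v).det := by
      rw [h.1.det_eq_prod_eigenvalues]
      apply Finset.prod_nonneg
      intro i _
      exact_mod_cast h.eigenvalues_nonneg i
    linarith
end
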